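/- arXiv:1805.06025 — 6 statements merged into one kernel-verified Lean document; each statement's English description precedes it below -/
import Mathlib

section
/- Let 0 < k̲ < k̄. There exists a constant C > 0, independent of u and λ, such that for every λ ≥ 1 and every twice continuously differentiable function u : [0,1] → ℂ with u(0) = 0 and u'(0) = 0, one has ∫₀¹ |u''(x)|² e^{-2λx} dx ≥ C ∫₀¹ |u''(x)|² e^{-2λx} dx + C λ ∫₀¹ |u'(x)|² e^{-2λx} dx + C λ³ ∫₀¹ |u(x)|² e^{-2λx} dx. (Lemma 3.2, Carleman estimate for the operator d²/dx².) -/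
open MeasureTheory

private lemma norm_sq_complex (z : ℂ) : ‖z‖^2 = z.re^2 + z.im^2 := by
  rw [Complex.sq_norm, Complex.normSq_apply]; ring

/-- Weighted Poincaré-type inequality: if `v 0 = 0` then
`λ ∫₀¹ ‖v‖² e^{-2λx} ≤ (1/λ) ∫₀¹ ‖v'‖² e^{-2λx}`. -/
private lemma key_ineq (lam : ℝ) (hlam : 1 ≤ lam) (v : ℝ → ℂ) (hv : ContDiff ℝ 1 v)
    (hv0 : v 0 = 0) :
    lam * (∫ x in (0:ℝ)..1, ‖v x‖ ^ 2 * Real.exp (-2 * lam * x)) ≤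
      (1/lam) * (∫ x in (0:ℝ)..1, ‖deriv v x‖ ^ 2 * Real.exp (-2 * lam * x)) := by
  have hlam0 : (0:ℝ) < lam := lt_of_lt_of_le one_pos hlam
  have hvd : Differentiable ℝ v := hv.differentiable one_ne_zero
  have hvc : Continuous v := hv.continuous
  have hdc : Continuous (deriv v) := by
    have := (contDiff_succ_iff_deriv (n := 0)).mp (by exact_mod_cast hv)
    exact this.2.2.continuous
  set e : ℝ → ℝ := fun x => Real.exp (-2 * lam * x) with he_def
  have hec : Continuous e := by continuity
  set F : ℝ → ℝ := fun x => ‖v x‖ ^ 2 * e x with hF_def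
  set D : ℝ → ℝ := fun x =>
    (2 * ((v x).re * (deriv v x).re + (v x).im * (deriv v x).im)
      - 2 * lam * ‖v x‖ ^ 2) * e x with hD_def
  -- D is the derivative of F
  have hF : ∀ x : ℝ, HasDerivAt F (D x) x := by
    intro x
    have hx : HasDerivAt v (deriv v x) x := (hvd x).hasDerivAt
    have ha : HasDerivAt (fun x => (v x).re) ((deriv v x).re) x :=
      Complex.reCLM.hasFDerivAt.comp_hasDerivAt x hx
    have hb : HasDerivAt (fun x => (v x).im) ((deriv v x).im) x :=
      Complex.imCLM.hasFDerivAt.comp_hasDerivAt x hx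
    have hn : HasDerivAt (fun x => ‖v x‖ ^ 2)
        (2 * ((v x).re * (deriv v x).re + (v x).im * (deriv v x).im)) x := by
      have h1 := (ha.pow 2).add (hb.pow 2)
      have heq : (fun x => ‖v x‖ ^ 2) = fun x => (v x).re ^ 2 + (v x).im ^ 2 := by
        funext y; exact norm_sq_complex (v y)
      rw [heq]
      exact h1.congr_deriv (by push_cast; ring)
    have he' : HasDerivAt e (-2 * lam * e x) x := by
      have h2 : HasDerivAt (fun x : ℝ => -2 * lam * x) (-2 * lam) x := by
        simpa using (hasDerivAt_id x).const_mul (-2 * lam)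
      simpa [he_def, mul_comm] using h2.exp
    have := hn.mul he'
    refine this.congr_deriv ?_
    simp only [hD_def]; ring
  have hDc : Continuous D := by
    apply Continuous.mul _ hec
    fun_prop
  have hDi : IntervalIntegrable D volume 0 1 := hDc.intervalIntegrable 0 1
  have hFTC : ∫ x in (0:ℝ)..1, D x = F 1 - F 0 :=
    intervalIntegral.integral_eq_sub_of_hasDerivAt (fun x _ => hF x) hDi
  have hF0 : F 0 = 0 := by simp [hF_def, hv0]
  have hF1 : 0 ≤ F 1 := mul_nonneg (by positivity) (Real.exp_nonneg _)
  have hD_nonneg : 0 ≤ ∫ x in (0:ℝ)..1, D x := by rw [hFTC, hF0]; linarith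
  -- pointwise bound D ≤ G
  set G : ℝ → ℝ := fun x =>
    ((1/lam) * ‖deriv v x‖ ^ 2 - lam * ‖v x‖ ^ 2) * e x with hG_def
  have hGc : Continuous G := by
    apply Continuous.mul _ hec
    fun_prop
  have hGi : IntervalIntegrable G volume 0 1 := hGc.intervalIntegrable 0 1
  have hDG : ∀ x ∈ Set.Icc (0:ℝ) 1, D x ≤ G x := by
    intro x _
    have hexp : 0 ≤ e x := Real.exp_nonneg _
    apply mul_le_mul_of_nonneg_right _ hexp
    rw [norm_sq_complex (v x), norm_sq_complex (deriv v x)]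
    set a := (v x).re; set b := (v x).im
    set a' := (deriv v x).re; set b' := (deriv v x).im
    have h : lam * (2 * (a * a' + b * b') - 2 * lam * (a ^ 2 + b ^ 2)) ≤
        lam * (1 / lam * (a' ^ 2 + b' ^ 2) - lam * (a ^ 2 + b ^ 2)) := by
      have hl : lam * (1 / lam * (a' ^ 2 + b' ^ 2) - lam * (a ^ 2 + b ^ 2)) =
          (a' ^ 2 + b' ^ 2) - lam ^ 2 * (a ^ 2 + b ^ 2) := by field_simp
      rw [hl]; nlinarith [sq_nonneg (lam * a - a'), sq_nonneg (lam * b - b')]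
    exact le_of_mul_le_mul_left h hlam0
  have hmono : ∫ x in (0:ℝ)..1, D x ≤ ∫ x in (0:ℝ)..1, G x :=
    intervalIntegral.integral_mono_on (by norm_num) hDi hGi hDG
  have hGval : ∫ x in (0:ℝ)..1, G x =
      (1/lam) * (∫ x in (0:ℝ)..1, ‖deriv v x‖ ^ 2 * e x)
        - lam * (∫ x in (0:ℝ)..1, ‖v x‖ ^ 2 * e x) := by
    have h1 : IntervalIntegrable (fun x => (1/lam) * (‖deriv v x‖ ^ 2 * e x)) volume 0 1 := by
      apply Continuous.intervalIntegrable; fun_prop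
    have h2 : IntervalIntegrable (fun x => lam * (‖v x‖ ^ 2 * e x)) volume 0 1 := by
      apply Continuous.intervalIntegrable; fun_prop
    have : ∫ x in (0:ℝ)..1, G x =
        ∫ x in (0:ℝ)..1, ((1/lam) * (‖deriv v x‖ ^ 2 * e x) - lam * (‖v x‖ ^ 2 * e x)) := by
      congr 1; funext x; simp only [hG_def]; ring
    rw [this, intervalIntegral.integral_sub h1 h2,
      intervalIntegral.integral_const_mul, intervalIntegral.integral_const_mul]
  have := le_trans hD_nonneg hmono
  rw [hGval] at this
  linarith

/-- **Lemma 3.2 (Carleman estimate for d²/dx²).**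
Let `0 < klow < khigh`. There exists a constant `C > 0`, independent of `u` and `λ`,
such that for every `λ ≥ 1` and every twice continuously differentiable `u : [0,1] → ℂ`
with `u 0 = 0` and `u' 0 = 0`,
`∫₀¹ |u''|² e^{-2λx} dx ≥ C ∫₀¹ |u''|² e^{-2λx} dx + C λ ∫₀¹ |u'|² e^{-2λx} dx
  + C λ³ ∫₀¹ |u|² e^{-2λx} dx`. -/
theorem carleman_estimate (klow khigh : ℝ) (hklow : 0 < klow) (hk : klow < khigh) :
    ∃ C : ℝ, 0 < C ∧ ∀ lam : ℝ, 1 ≤ lam → ∀ u : ℝ → ℂ, ContDiff ℝ 2 u →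
      u 0 = 0 → deriv u 0 = 0 →
      (∫ x in (0:ℝ)..1, ‖deriv (deriv u) x‖ ^ 2 * Real.exp (-2 * lam * x)) ≥
        C * (∫ x in (0:ℝ)..1, ‖deriv (deriv u) x‖ ^ 2 * Real.exp (-2 * lam * x))
        + C * lam * (∫ x in (0:ℝ)..1, ‖deriv u x‖ ^ 2 * Real.exp (-2 * lam * x))
        + C * lam ^ 3 * (∫ x in (0:ℝ)..1, ‖u x‖ ^ 2 * Real.exp (-2 * lam * x)) := by
  refine ⟨1/3, by norm_num, ?_⟩
  intro lam hlam u hu hu0 hu'0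
  have hlam0 : (0:ℝ) < lam := lt_of_lt_of_le one_pos hlam
  have hu1 : ContDiff ℝ 1 u := hu.of_le (by norm_num)
  have hdu1 : ContDiff ℝ 1 (deriv u) := by
    have := (contDiff_succ_iff_deriv (n := 1)).mp (by exact_mod_cast hu)
    exact this.2.2
  set I0 := ∫ x in (0:ℝ)..1, ‖u x‖ ^ 2 * Real.exp (-2 * lam * x) with hI0
  set I1 := ∫ x in (0:ℝ)..1, ‖deriv u x‖ ^ 2 * Real.exp (-2 * lam * x) with hI1
  set I2 := ∫ x in (0:ℝ)..1, ‖deriv (deriv u) x‖ ^ 2 * Real.exp (-2 * lam * x) with hI2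
  have k1 : lam * I0 ≤ (1/lam) * I1 := key_ineq lam hlam u hu1 hu0
  have k2 : lam * I1 ≤ (1/lam) * I2 := key_ineq lam hlam (deriv u) hdu1 hu'0
  -- nonnegativity
  have hI1nn : 0 ≤ I1 := by
    apply intervalIntegral.integral_nonneg (by norm_num)
    intro x _; positivity
  have hI2nn : 0 ≤ I2 := by
    apply intervalIntegral.integral_nonneg (by norm_num)
    intro x _; positivity
  have hI0nn : 0 ≤ I0 := by
    apply intervalIntegral.integral_nonneg (by norm_num)
    intro x _; positivity
  -- λ I1 ≤ I2, λ³ I0 ≤ I2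
  have h1 : lam * I1 ≤ I2 := by
    calc lam * I1 ≤ (1/lam) * I2 := k2
    _ ≤ 1 * I2 := by
        apply mul_le_mul_of_nonneg_right _ hI2nn
        rw [div_le_one hlam0]; exact hlam
    _ = I2 := one_mul _
  have h0 : lam ^ 3 * I0 ≤ I2 := by
    have step : lam ^ 2 * (lam * I0) ≤ lam ^ 2 * ((1/lam) * I1) :=
      mul_le_mul_of_nonneg_left k1 (by positivity)
    have heq : lam ^ 2 * ((1/lam) * I1) = lam * I1 := by
      field_simp
    calc lam ^ 3 * I0 = lam ^ 2 * (lam * I0) := by ring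
    _ ≤ lam * I1 := by rw [← heq]; exact step
    _ ≤ I2 := h1
  linarith
end

section
/- Let 0 < k̲ < k̄ and let (pₙ)ₙ₌₀^∞ be real polynomials with deg pₙ = n for every n, such that the functions φₙ(k) = pₙ(k) e^k form an orthonormal system in L²(0,1), i.e. ∫₀¹ φₙ(k) φₘ(k) dk = 1 if n = m and 0 otherwise. Define ψₙ(k) = (k̄ − k̲)^{-1/2} φₙ((k − k̲)/(k̄ − k̲)) for k ∈ [k̲, k̄], and set aₘₙ = ∫_{k̲}^{k̄} ψₙ'(k) ψₘ(k) dk. Then aₘₙ = (k̄ − k̲)^{-1} if n = m and aₘₙ = 0 if n < m; consequently, for every integer N ≥ 1 the N×N matrix M_N = (aₘₙ)_{m,n=0}^{N-1} is upper triangular with det(M_N) = (k̄ − k̲)^{-N} ≠ 0, so M_N is invertible. (Lemma 3.1.) -/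
open MeasureTheory

/-- **Lemma 3.1.** Let `0 < klow < khigh` and let `(pₙ)` be real polynomials with
`deg pₙ = n`, such that `φₙ(k) = pₙ(k) eᵏ` form an orthonormal system in `L²(0,1)`.
Define `ψₙ(k) = (khigh − klow)^{-1/2} φₙ((k − klow)/(khigh − klow))` and
`aₘₙ = ∫_{klow}^{khigh} ψₙ'(k) ψₘ(k) dk`. Then `aₙₙ = (khigh − klow)⁻¹`, `aₘₙ = 0`
for `n < m`, and for every `N ≥ 1` the matrix `M_N = (aₘₙ)_{m,n<N}` has determinant
`(khigh − klow)^{-N} ≠ 0` and is invertible. -/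
theorem special_basis_matrix_invertible
    (klow khigh : ℝ) (hklow : 0 < klow) (hk : klow < khigh)
    (p : ℕ → Polynomial ℝ) (hdeg : ∀ n : ℕ, (p n).degree = n)
    (φ : ℕ → ℝ → ℝ) (hφ : ∀ n k, φ n k = (p n).eval k * Real.exp k)
    (horth : ∀ n m : ℕ,
      (∫ k in (0:ℝ)..1, φ n k * φ m k) = if n = m then 1 else 0)
    (ψ : ℕ → ℝ → ℝ)
    (hψ : ∀ n k, ψ n k =
      (Real.sqrt (khigh - klow))⁻¹ * φ n ((k - klow) / (khigh - klow)))
    (a : ℕ → ℕ → ℝ)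
    (ha : ∀ m n, a m n = ∫ k in klow..khigh, deriv (ψ n) k * ψ m k) :
    (∀ n : ℕ, a n n = (khigh - klow)⁻¹) ∧
    (∀ m n : ℕ, n < m → a m n = 0) ∧
    (∀ N : ℕ, 1 ≤ N →
      (Matrix.of fun m n : Fin N => a m n).det = ((khigh - klow)⁻¹) ^ N ∧
      ((khigh - klow)⁻¹) ^ N ≠ 0 ∧
      IsUnit (Matrix.of fun m n : Fin N => a m n)) := by
  have hc : (0:ℝ) < khigh - klow := sub_pos.2 hk
  have hc0 : khigh - klow ≠ 0 := ne_of_gt hc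
  have hφf : ∀ n, φ n = fun k => (p n).eval k * Real.exp k := fun n => funext (hφ n)
  have hψf : ∀ n, ψ n = fun k =>
      (Real.sqrt (khigh - klow))⁻¹ * φ n ((k - klow) / (khigh - klow)) :=
    fun n => funext (hψ n)
  have hpne : ∀ n, p n ≠ 0 := by
    intro n h
    have := hdeg n
    rw [h, Polynomial.degree_zero] at this
    exact absurd this (by simp)
  have hcontφ : ∀ n, Continuous (φ n) := by
    intro n; rw [hφf]
    exact ((p n).continuous).mul Real.continuous_exp
  have hcont : ∀ (q : Polynomial ℝ) (m : ℕ),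
      Continuous fun x => q.eval x * Real.exp x * φ m x := by
    intro q m
    exact (q.continuous.mul Real.continuous_exp).mul (hcontφ m)
  have hintq : ∀ (q : Polynomial ℝ) (m : ℕ) (x y : ℝ),
      IntervalIntegrable (fun t => q.eval t * Real.exp t * φ m t) volume x y :=
    fun q m x y => (hcont q m).intervalIntegrable x y
  -- Key vanishing lemma: ∫₀¹ q(x) eˣ φₘ(x) dx = 0 whenever deg q < m.
  have key : ∀ (d : ℕ) (q : Polynomial ℝ), q.natDegree ≤ d → ∀ m : ℕ,
      q.degree < (m : ℕ) → (∫ x in (0:ℝ)..1, q.eval x * Real.exp x * φ m x) = 0 := by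
    intro d
    induction d using Nat.strong_induction_on with
    | _ d ih =>
      intro q hqd m hqm
      by_cases h0 : q = 0
      · simp [h0]
      by_cases hlt : q.natDegree < d
      · exact ih q.natDegree hlt q le_rfl m hqm
      have hdeq : q.natDegree = d := le_antisymm hqd (not_lt.1 hlt)
      have hqdeg : q.degree = (d : ℕ) := by
        rw [Polynomial.degree_eq_natDegree h0, hdeq]
      have hdm : d < m := by
        have := hqm; rw [hqdeg] at this; exact_mod_cast this
      have hlcq : q.leadingCoeff ≠ 0 := Polynomial.leadingCoeff_ne_zero.2 h0
      have hlcp : (p d).leadingCoeff ≠ 0 := Polynomial.leadingCoeff_ne_zero.2 (hpne d)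
      set s : ℝ := q.leadingCoeff / (p d).leadingCoeff with hs
      have hsne : s ≠ 0 := div_ne_zero hlcq hlcp
      set r : Polynomial ℝ := q - Polynomial.C s * p d with hr
      have hqr : q = Polynomial.C s * p d + r := by rw [hr]; ring
      have hdegCs : (Polynomial.C s * p d).degree = (d : ℕ) := by
        rw [Polynomial.degree_C_mul hsne, hdeg]
      have hlceq : q.leadingCoeff = (Polynomial.C s * p d).leadingCoeff := by
        rw [Polynomial.leadingCoeff_mul, Polynomial.leadingCoeff_C, hs,
          div_mul_cancel₀ _ hlcp]
      have hrdeg : r.degree < (d : ℕ) := by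
        have := Polynomial.degree_sub_lt (hqdeg.trans hdegCs.symm) h0 hlceq
        rwa [← hr, hqdeg] at this
      have hsplit : (∫ x in (0:ℝ)..1, q.eval x * Real.exp x * φ m x)
          = s * (∫ x in (0:ℝ)..1, (p d).eval x * Real.exp x * φ m x)
            + ∫ x in (0:ℝ)..1, r.eval x * Real.exp x * φ m x := by
        rw [← intervalIntegral.integral_const_mul, ← intervalIntegral.integral_add
          ((hintq (p d) m 0 1).const_mul s) (hintq r m 0 1)]
        congr 1; funext x
        rw [hqr]; simp [Polynomial.eval_add, Polynomial.eval_mul]; ring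
      have horth' : (∫ x in (0:ℝ)..1, (p d).eval x * Real.exp x * φ m x) = 0 := by
        have : (∫ x in (0:ℝ)..1, φ d x * φ m x) = 0 := by
          rw [horth d m, if_neg (Nat.ne_of_lt hdm)]
        rw [← this]; congr 1; funext x; rw [hφ d x]
      have hrint : (∫ x in (0:ℝ)..1, r.eval x * Real.exp x * φ m x) = 0 := by
        by_cases hr0 : r = 0
        · simp [hr0]
        · have hrnat : r.natDegree < d := by
            have := Polynomial.degree_eq_natDegree hr0 ▸ hrdeg
            exact_mod_cast this
          exact ih r.natDegree hrnat r le_rfl m (hrdeg.trans (by exact_mod_cast hdm))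
      rw [hsplit, horth', hrint]; ring
  -- derivative of φ n
  have hφd : ∀ (n : ℕ) (x : ℝ), HasDerivAt (φ n)
      (((p n).derivative + p n).eval x * Real.exp x) x := by
    intro n x
    rw [hφf n]
    have := ((p n).hasDerivAt x).mul (Real.hasDerivAt_exp x)
    exact this.congr_deriv (by rw [Polynomial.eval_add]; ring)
  -- derivative of ψ n
  have hψd : ∀ (n : ℕ) (k : ℝ), deriv (ψ n) k =
      (Real.sqrt (khigh - klow))⁻¹ * (khigh - klow)⁻¹ *
        (((p n).derivative + p n).eval ((k - klow) / (khigh - klow)) *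
          Real.exp ((k - klow) / (khigh - klow))) := by
    intro n k
    have hin : HasDerivAt (fun k : ℝ => (k - klow) / (khigh - klow))
        ((khigh - klow)⁻¹) k := by
      simpa using ((hasDerivAt_id k).sub_const klow).div_const (khigh - klow)
    have h1 : HasDerivAt (ψ n)
        ((Real.sqrt (khigh - klow))⁻¹ *
          (((p n).derivative + p n).eval ((k - klow) / (khigh - klow)) *
            Real.exp ((k - klow) / (khigh - klow)) * (khigh - klow)⁻¹)) k := by
      rw [hψf n]
      exact (((hφd n ((k - klow) / (khigh - klow))).comp k hin)).const_mul _
    rw [h1.deriv]; ring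
  -- the main integral computation
  have hmain : ∀ m n : ℕ, a m n = (khigh - klow)⁻¹ *
      ∫ x in (0:ℝ)..1, ((p n).derivative + p n).eval x * Real.exp x * φ m x := by
    intro m n
    rw [ha m n]
    have hint : ∀ k : ℝ, deriv (ψ n) k * ψ m k = (khigh - klow)⁻¹ * (khigh - klow)⁻¹ *
        ((fun x => ((p n).derivative + p n).eval x * Real.exp x * φ m x)
          ((k - klow) / (khigh - klow))) := by
      intro k
      rw [hψd n k, hψ m k]
      have hsq : (Real.sqrt (khigh - klow))⁻¹ * (Real.sqrt (khigh - klow))⁻¹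
          = (khigh - klow)⁻¹ := by
        rw [← mul_inv]
        rw [Real.mul_self_sqrt hc.le]
      rw [← hsq]; ring
    rw [intervalIntegral.integral_congr (g := fun k =>
        (khigh - klow)⁻¹ * (khigh - klow)⁻¹ *
        ((fun x => ((p n).derivative + p n).eval x * Real.exp x * φ m x)
          ((k - klow) / (khigh - klow)))) (fun k _ => hint k)]
    rw [intervalIntegral.integral_const_mul]
    have hsub : (∫ k in klow..khigh,
        (fun x => ((p n).derivative + p n).eval x * Real.exp x * φ m x)
          ((k - klow) / (khigh - klow)))
        = (khigh - klow) *
          ∫ x in (0:ℝ)..1, ((p n).derivative + p n).eval x * Real.exp x * φ m x := by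
      rw [show (fun k : ℝ => (fun x => ((p n).derivative + p n).eval x * Real.exp x * φ m x)
          ((k - klow) / (khigh - klow)))
        = (fun k : ℝ => (fun u : ℝ => (fun x => ((p n).derivative + p n).eval x *
            Real.exp x * φ m x) (u / (khigh - klow))) (k - klow)) from rfl]
      rw [intervalIntegral.integral_comp_sub_right
        (fun u : ℝ => (fun x => ((p n).derivative + p n).eval x * Real.exp x * φ m x)
          (u / (khigh - klow))) klow]
      rw [intervalIntegral.integral_comp_div
        (fun x => ((p n).derivative + p n).eval x * Real.exp x * φ m x) hc0]
      rw [sub_self, zero_div, div_self hc0, smul_eq_mul]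
    rw [hsub]; field_simp
  -- diagonal entries
  have hdiag : ∀ n : ℕ, a n n = (khigh - klow)⁻¹ := by
    intro n
    rw [hmain n n]
    have hsplit : (∫ x in (0:ℝ)..1, ((p n).derivative + p n).eval x * Real.exp x * φ n x)
        = (∫ x in (0:ℝ)..1, (p n).derivative.eval x * Real.exp x * φ n x)
          + ∫ x in (0:ℝ)..1, (p n).eval x * Real.exp x * φ n x := by
      rw [← intervalIntegral.integral_add (hintq _ n 0 1) (hintq _ n 0 1)]
      congr 1; funext x; simp [Polynomial.eval_add]; ring
    have h1 : (∫ x in (0:ℝ)..1, (p n).derivative.eval x * Real.exp x * φ n x) = 0 := by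
      apply key (p n).derivative.natDegree _ le_rfl
      calc (p n).derivative.degree < (p n).degree := Polynomial.degree_derivative_lt (hpne n)
        _ = (n : ℕ) := hdeg n
    have h2 : (∫ x in (0:ℝ)..1, (p n).eval x * Real.exp x * φ n x) = 1 := by
      have : (∫ x in (0:ℝ)..1, φ n x * φ n x) = 1 := by rw [horth n n, if_pos rfl]
      rw [← this]; congr 1; funext x; rw [hφ n x]
    rw [hsplit, h1, h2]; ring
  -- subdiagonal entries vanish
  have hlow : ∀ m n : ℕ, n < m → a m n = 0 := by
    intro m n hnm
    rw [hmain m n]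
    have h0 : (∫ x in (0:ℝ)..1, ((p n).derivative + p n).eval x * Real.exp x * φ m x) = 0 := by
      apply key ((p n).derivative + p n).natDegree _ le_rfl
      calc ((p n).derivative + p n).degree
          ≤ max (p n).derivative.degree (p n).degree := Polynomial.degree_add_le _ _
        _ ≤ (p n).degree := by
            apply max_le _ le_rfl
            by_cases h : p n = 0
            · exact absurd h (hpne n)
            · exact (Polynomial.degree_derivative_lt h).le
        _ = (n : ℕ) := hdeg n
        _ < (m : ℕ) := by exact_mod_cast hnm
    rw [h0]; ring
  refine ⟨hdiag, hlow, ?_⟩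
  intro N hN
  have hdet : (Matrix.of fun m n : Fin N => a m n).det = ((khigh - klow)⁻¹) ^ N := by
    rw [Matrix.det_of_upperTriangular]
    · rw [Finset.prod_congr rfl (fun i _ => by
        show a i i = (khigh - klow)⁻¹; exact hdiag i)]
      simp
    · intro i j hij
      exact hlow i j (by exact_mod_cast hij)
  have hne : ((khigh - klow)⁻¹) ^ N ≠ 0 := pow_ne_zero _ (inv_ne_zero hc0)
  refine ⟨hdet, hne, ?_⟩
  rw [Matrix.isUnit_iff_isUnit_det, hdet]
  exact (hne).isUnit
end

section
/- Let c : ℝ → ℝ be continuous with c(x) ≥ c₀ for some constant c₀ > 0 and c(x) = 1 for all x ∉ (0,1). Let x₀ < 0 and k > 0. Let u : ℝ → ℂ be a continuous function satisfying the one-dimensional Lippmann–Schwinger equation u(x) = e^{-ik|x−x₀|}/(2ik) + (k/(2i)) ∫₀¹ e^{-ik|x−ξ|} (c(ξ) − 1) u(ξ) dξ for all x ∈ ℝ. Then u(x) ≠ 0 for every x > x₀. (Lemma 2.1.) -/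
open MeasureTheory

private lemma im_conj_mul_self (z : ℂ) : ((starRingEnd ℂ) z * z).im = 0 := by
  rw [← Complex.normSq_eq_conj_mul_self]; simp

private lemma im_conj_mul_real_smul (r : ℝ) (z : ℂ) :
    ((starRingEnd ℂ) z * ((r : ℂ) * z)).im = 0 := by
  simp [Complex.mul_im, Complex.mul_re]
  ring

private lemma exp_real_hasDerivAt (a : ℂ) (x : ℝ) :
    HasDerivAt (fun t : ℝ => Complex.exp (a * t)) (a * Complex.exp (a * x)) x := by
  have h1 : HasDerivAt (fun t : ℝ => a * (t : ℂ)) a x := by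
    simpa using (Complex.ofRealCLM.hasDerivAt (x := x)).const_mul a
  simpa [mul_comm] using h1.cexp

/-- **Lemma 2.1.** Let `c : ℝ → ℝ` be continuous with `c ≥ c₀ > 0` and `c = 1` outside
`(0,1)`. Let `x₀ < 0` and `k > 0`. If a continuous `u : ℝ → ℂ` satisfies the 1-D
Lippmann–Schwinger equation
`u(x) = e^{-ik|x−x₀|}/(2ik) + (k/(2i)) ∫₀¹ e^{-ik|x−ξ|}(c(ξ) − 1)u(ξ) dξ`,
then `u(x) ≠ 0` for every `x > x₀`. -/
theorem lippmann_schwinger_solution_ne_zero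
    (c : ℝ → ℝ) (c₀ : ℝ) (hc₀ : 0 < c₀) (hc : Continuous c)
    (hcb : ∀ x : ℝ, c₀ ≤ c x) (hc1 : ∀ x : ℝ, x ∉ Set.Ioo (0:ℝ) 1 → c x = 1)
    (x₀ : ℝ) (hx₀ : x₀ < 0) (k : ℝ) (hk : 0 < k)
    (u : ℝ → ℂ) (hu : Continuous u)
    (hLS : ∀ x : ℝ, u x =
        Complex.exp (-Complex.I * (k : ℂ) * ((|x - x₀| : ℝ) : ℂ)) / (2 * Complex.I * (k : ℂ))
        + ((k : ℂ) / (2 * Complex.I)) *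
            ∫ ξ in (0:ℝ)..1,
              Complex.exp (-Complex.I * (k : ℂ) * ((|x - ξ| : ℝ) : ℂ)) *
                ((c ξ : ℂ) - 1) * u ξ) :
    ∀ x : ℝ, x₀ < x → u x ≠ 0 := by
  intro x₁ hx₁ h0
  have hkC : (k : ℂ) ≠ 0 := by exact_mod_cast hk.ne'
  have hI := Complex.I_ne_zero
  set φ : ℝ → ℂ := fun t => ((c t : ℂ) - 1) * u t with hφdef
  have hφcont : Continuous φ :=
    ((Complex.continuous_ofReal.comp hc).sub continuous_const).mul hu
  have hφ0 : ∀ t, t ∉ Set.Ioo (0:ℝ) 1 → φ t = 0 := by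
    intro t ht; simp [hφdef, hc1 t ht]
  set β : ℂ := (k : ℂ) / (2 * Complex.I) with hβdef
  set α : ℂ := Complex.exp (Complex.I * k * x₀) / (2 * Complex.I * k) with hαdef
  set P : ℝ → ℂ := fun x => ∫ t in (0:ℝ)..x, Complex.exp (Complex.I * k * t) * φ t with hPdef
  set Q : ℝ → ℂ := fun x => ∫ t in x..(1:ℝ), Complex.exp (-Complex.I * k * t) * φ t with hQdef
  set v : ℝ → ℂ := fun x =>
    Complex.exp (-Complex.I * k * x) * (α + β * P x)
      + Complex.exp (Complex.I * k * x) * (β * Q x) with hvdef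
  set w : ℝ → ℂ := fun x =>
    -Complex.I * k * (Complex.exp (-Complex.I * k * x) * (α + β * P x))
      + Complex.I * k * (Complex.exp (Complex.I * k * x) * (β * Q x)) with hwdef
  have hcexp : ∀ a : ℂ, Continuous fun t : ℝ => Complex.exp (a * t) :=
    fun a => Complex.continuous_exp.comp (continuous_const.mul Complex.continuous_ofReal)
  have hcontP : Continuous fun t : ℝ => Complex.exp (Complex.I * k * t) * φ t :=
    (hcexp _).mul hφcont
  have hcontQ : Continuous fun t : ℝ => Complex.exp (-Complex.I * k * t) * φ t :=
    (hcexp _).mul hφcont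
  have hP : ∀ x : ℝ, HasDerivAt P (Complex.exp (Complex.I * k * x) * φ x) x := by
    intro x
    exact intervalIntegral.integral_hasDerivAt_right (hcontP.intervalIntegrable _ _)
      (hcontP.stronglyMeasurableAtFilter _ _) hcontP.continuousAt
  have hQ : ∀ x : ℝ, HasDerivAt Q (-(Complex.exp (-Complex.I * k * x) * φ x)) x := by
    intro x
    have h1 : HasDerivAt (fun y => ∫ t in (1:ℝ)..y, Complex.exp (-Complex.I * k * t) * φ t)
        (Complex.exp (-Complex.I * k * x) * φ x) x :=
      intervalIntegral.integral_hasDerivAt_right (hcontQ.intervalIntegrable _ _)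
        (hcontQ.stronglyMeasurableAtFilter _ _) hcontQ.continuousAt
    have hfun : Q = fun y => -∫ t in (1:ℝ)..y, Complex.exp (-Complex.I * k * t) * φ t :=
      funext fun y => intervalIntegral.integral_symm 1 y
    rw [hfun]
    exact h1.neg
  have hsplit : ∀ (a b m : ℝ) (g : ℝ → ℂ), Continuous g →
      (∫ t in a..b, g t) = (∫ t in a..m, g t) + ∫ t in m..b, g t :=
    fun a b m g hg => (intervalIntegral.integral_add_adjacent_intervals
      (hg.intervalIntegrable _ _) (hg.intervalIntegrable _ _)).symm
  have hzero : ∀ (a b : ℝ) (g : ℝ → ℂ), (∀ t ∈ Set.uIcc a b, g t = 0) →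
      (∫ t in a..b, g t) = 0 := by
    intro a b g hg
    rw [intervalIntegral.integral_congr (g := fun _ => (0:ℂ)) hg]
    simp
  have hF : ∀ x : ℝ,
      (∫ ξ in (0:ℝ)..1, Complex.exp (-Complex.I * k * ((|x - ξ| : ℝ) : ℂ)) * φ ξ)
        = Complex.exp (-Complex.I * k * x) * P x + Complex.exp (Complex.I * k * x) * Q x := by
    intro x
    have hgc : Continuous fun ξ : ℝ =>
        Complex.exp (-Complex.I * k * ((|x - ξ| : ℝ) : ℂ)) * φ ξ := by
      exact ((Complex.continuous_exp.comp (continuous_const.mul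
        (Complex.continuous_ofReal.comp ((continuous_const.sub continuous_id).abs)))).mul hφcont)
    rcases le_total x 0 with hx | hx
    · -- x ≤ 0
      have hP0 : P x = 0 := by
        rw [hPdef]
        apply hzero
        intro t ht
        rw [Set.uIcc_of_ge hx] at ht
        have : t ∉ Set.Ioo (0:ℝ) 1 := fun hmem => absurd hmem.1 (not_lt.2 ht.2)
        simp [hφ0 t this]
      have hQs : Q x = ∫ t in (0:ℝ)..1, Complex.exp (-Complex.I * k * t) * φ t := by
        show (∫ t in x..(1:ℝ), Complex.exp (-Complex.I * k * t) * φ t) = _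
        rw [hsplit x 1 0 _ hcontQ, hzero x 0 _ ?_, zero_add]
        intro t ht
        rw [Set.uIcc_of_le hx] at ht
        have : t ∉ Set.Ioo (0:ℝ) 1 := fun hmem => absurd hmem.1 (not_lt.2 ht.2)
        simp [hφ0 t this]
      have hInt : (∫ ξ in (0:ℝ)..1, Complex.exp (-Complex.I * k * ((|x - ξ| : ℝ) : ℂ)) * φ ξ)
          = Complex.exp (Complex.I * k * x) *
              ∫ t in (0:ℝ)..1, Complex.exp (-Complex.I * k * t) * φ t := by
        rw [← intervalIntegral.integral_const_mul]
        apply intervalIntegral.integral_congr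
        intro ξ hξ
        dsimp only
        by_cases hφξ : φ ξ = 0
        · simp [hφξ]
        · have hmem : ξ ∈ Set.Ioo (0:ℝ) 1 := by
            by_contra h; exact hφξ (hφ0 ξ h)
          have habs : |x - ξ| = ξ - x := by
            rw [abs_of_nonpos (by linarith [hmem.1])]; ring
          rw [habs]
          have hexp : (-Complex.I * k * ((ξ - x : ℝ) : ℂ))
              = Complex.I * k * x + -Complex.I * k * ξ := by push_cast; ring
          rw [hexp, Complex.exp_add]; ring
      rw [hInt, hP0, hQs]; ring
    · rcases le_total x 1 with hx1 | hx1
      · -- 0 ≤ x ≤ 1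
        rw [hsplit 0 1 x _ hgc]
        congr 1
        · rw [hPdef, ← intervalIntegral.integral_const_mul]
          apply intervalIntegral.integral_congr
          intro ξ hξ
          dsimp only
          rw [Set.uIcc_of_le hx] at hξ
          have habs : |x - ξ| = x - ξ := abs_of_nonneg (by linarith [hξ.2])
          rw [habs]
          have hexp : (-Complex.I * k * ((x - ξ : ℝ) : ℂ))
              = -Complex.I * k * x + Complex.I * k * ξ := by push_cast; ring
          rw [hexp, Complex.exp_add]; ring
        · rw [hQdef, ← intervalIntegral.integral_const_mul]
          apply intervalIntegral.integral_congr
          intro ξ hξ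
          dsimp only
          rw [Set.uIcc_of_le hx1] at hξ
          have habs : |x - ξ| = ξ - x := by
            rw [abs_of_nonpos (by linarith [hξ.1])]; ring
          rw [habs]
          have hexp : (-Complex.I * k * ((ξ - x : ℝ) : ℂ))
              = Complex.I * k * x + -Complex.I * k * ξ := by push_cast; ring
          rw [hexp, Complex.exp_add]; ring
      · -- 1 ≤ x
        have hQ0 : Q x = 0 := by
          rw [hQdef]
          apply hzero
          intro t ht
          rw [Set.uIcc_of_ge hx1] at ht
          have : t ∉ Set.Ioo (0:ℝ) 1 := fun hmem => absurd hmem.2 (not_lt.2 ht.1)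
          simp [hφ0 t this]
        have hPs : P x = ∫ t in (0:ℝ)..1, Complex.exp (Complex.I * k * t) * φ t := by
          show (∫ t in (0:ℝ)..x, Complex.exp (Complex.I * k * t) * φ t) = _
          rw [hsplit 0 x 1 _ hcontP, hzero 1 x _ ?_, add_zero]
          intro t ht
          rw [Set.uIcc_of_le hx1] at ht
          have : t ∉ Set.Ioo (0:ℝ) 1 := fun hmem => absurd hmem.2 (not_lt.2 ht.1)
          simp [hφ0 t this]
        have hInt : (∫ ξ in (0:ℝ)..1, Complex.exp (-Complex.I * k * ((|x - ξ| : ℝ) : ℂ)) * φ ξ)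
            = Complex.exp (-Complex.I * k * x) *
                ∫ t in (0:ℝ)..1, Complex.exp (Complex.I * k * t) * φ t := by
          rw [← intervalIntegral.integral_const_mul]
          apply intervalIntegral.integral_congr
          intro ξ hξ
          dsimp only
          rw [Set.uIcc_of_le (zero_le_one)] at hξ
          have habs : |x - ξ| = x - ξ := abs_of_nonneg (by linarith [hξ.2])
          rw [habs]
          have hexp : (-Complex.I * k * ((x - ξ : ℝ) : ℂ))
              = -Complex.I * k * x + Complex.I * k * ξ := by push_cast; ring
          rw [hexp, Complex.exp_add]; ring
        rw [hInt, hQ0, hPs]; ring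
  have huv : ∀ x : ℝ, x₀ ≤ x → u x = v x := by
    intro x hx
    have h1 : (∫ ξ in (0:ℝ)..1,
        Complex.exp (-Complex.I * (k : ℂ) * ((|x - ξ| : ℝ) : ℂ)) * ((c ξ : ℂ) - 1) * u ξ)
        = ∫ ξ in (0:ℝ)..1, Complex.exp (-Complex.I * k * ((|x - ξ| : ℝ) : ℂ)) * φ ξ :=
      intervalIntegral.integral_congr fun ξ _ => mul_assoc _ _ _
    have habs : |x - x₀| = x - x₀ := abs_of_nonneg (by linarith)
    have hexp : (-Complex.I * (k : ℂ) * ((x - x₀ : ℝ) : ℂ))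
        = -Complex.I * k * x + Complex.I * k * x₀ := by push_cast; ring
    rw [hLS x, h1, hF x, hvdef, hαdef, hβdef, habs, hexp, Complex.exp_add]
    ring
  have hφv : ∀ x : ℝ, φ x = ((c x : ℂ) - 1) * v x := by
    intro x
    by_cases hmem : x ∈ Set.Ioo (0:ℝ) 1
    · have : u x = v x := huv x (by linarith [hmem.1])
      rw [hφdef]; dsimp only; rw [this]
    · rw [hφ0 x hmem, hc1 x hmem]; simp
  have hv' : ∀ x : ℝ, HasDerivAt v (w x) x := by
    intro x
    have h1 := (exp_real_hasDerivAt (-Complex.I * k) x).mul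
      (((hP x).const_mul β).const_add α)
    have h2 := (exp_real_hasDerivAt (Complex.I * k) x).mul ((hQ x).const_mul β)
    have h3 := h1.add h2
    refine h3.congr_deriv (Eq.symm ?_)
    rw [hwdef]
    ring
  have hw' : ∀ x : ℝ, HasDerivAt w (((-(k^2) * c x : ℝ) : ℂ) * v x) x := by
    intro x
    have h1 := ((exp_real_hasDerivAt (-Complex.I * k) x).mul
      (((hP x).const_mul β).const_add α)).const_mul (-Complex.I * k)
    have h2 := ((exp_real_hasDerivAt (Complex.I * k) x).mul
      ((hQ x).const_mul β)).const_mul (Complex.I * k)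
    have h3 := h1.add h2
    refine h3.congr_deriv (Eq.symm ?_)
    have hE : Complex.exp (-Complex.I * k * x) * Complex.exp (Complex.I * k * x) = 1 := by
      rw [← Complex.exp_add]; ring_nf; exact Complex.exp_zero
    have hI2 : Complex.I ^ 2 = -1 := Complex.I_sq
    have hβk : 2 * Complex.I * β = (k : ℂ) := by
      rw [hβdef]; field_simp
    have hv0 : v x = Complex.exp (-Complex.I * k * x) * (α + β * P x)
        + Complex.exp (Complex.I * k * x) * (β * Q x) := by rw [hvdef]
    rw [hφv x]
    push_cast
    linear_combination (Complex.I ^ 2 * (k:ℂ) ^ 2) * hv0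
      + (2 * Complex.I * (k:ℂ) * β * ((((c x : ℝ):ℂ) - 1) * v x)) * hE
      + (-((k:ℂ) ^ 2 * v x)) * hI2
      + ((k:ℂ) * ((((c x : ℝ):ℂ) - 1) * v x)) * hβk
  have hvcont : Continuous v := by
    rw [continuous_iff_continuousAt]; exact fun x => (hv' x).continuousAt
  have hwcont : Continuous w := by
    rw [continuous_iff_continuousAt]; exact fun x => (hw' x).continuousAt
  set W : ℝ → ℝ := fun x => ((starRingEnd ℂ) (v x) * w x).im with hWdef
  have hW' : ∀ x : ℝ, HasDerivAt W 0 x := by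
    intro x
    have hconj : HasDerivAt (fun t => (starRingEnd ℂ) (v t)) ((starRingEnd ℂ) (w x)) x := by
      have := Complex.conjCLE.toContinuousLinearMap.hasFDerivAt.comp_hasDerivAt x (hv' x)
      exact this
    have hmul := hconj.mul (hw' x)
    have him := Complex.imCLM.hasFDerivAt.comp_hasDerivAt x hmul
    have hval : Complex.imCLM ((starRingEnd ℂ) (w x) * w x
        + (starRingEnd ℂ) (v x) * (((-(k^2) * c x : ℝ) : ℂ) * v x)) = 0 := by
      have h1 : ((starRingEnd ℂ) (w x) * w x).im = 0 := im_conj_mul_self _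
      have h2 : ((starRingEnd ℂ) (v x) * (((-(k^2) * c x : ℝ) : ℂ) * v x)).im = 0 :=
        im_conj_mul_real_smul _ _
      simp only [map_add, Complex.imCLM_apply, h1, h2, add_zero]
    rw [hval] at him
    exact him
  have hWconst : ∀ y z : ℝ, W y = W z := fun y z =>
    is_const_of_deriv_eq_zero (fun t => (hW' t).differentiableAt) (fun t => (hW' t).deriv) y z
  have hvx₁ : v x₁ = 0 := by rw [← huv x₁ hx₁.le]; exact h0
  have hW0 : ∀ y : ℝ, W y = 0 := by
    intro y
    rw [hWconst y x₁, hWdef]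
    dsimp only
    rw [hvx₁]
    simp
  have hQ2 : Q 2 = 0 := by
    apply hzero
    intro t ht
    rw [Set.uIcc_of_ge (by norm_num : (1:ℝ) ≤ 2)] at ht
    have : t ∉ Set.Ioo (0:ℝ) 1 := fun hmem => absurd hmem.2 (not_lt.2 ht.1)
    simp [hφ0 t this]
  have hP21 : P 2 = P 1 := by
    show (∫ t in (0:ℝ)..2, Complex.exp (Complex.I * k * t) * φ t) = _
    have hz12 : ∀ t ∈ Set.uIcc (1:ℝ) 2, Complex.exp (Complex.I * k * t) * φ t = 0 := by
      intro t ht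
      rw [Set.uIcc_of_le (by norm_num : (1:ℝ) ≤ 2)] at ht
      have : t ∉ Set.Ioo (0:ℝ) 1 := fun hmem => absurd hmem.2 (not_lt.2 ht.1)
      simp [hφ0 t this]
    rw [hsplit 0 2 1 _ hcontP, hzero 1 2 _ hz12, add_zero]
  set B : ℂ := α + β * P 1 with hBdef
  have hv2 : v 2 = Complex.exp (-Complex.I * k * (2:ℝ)) * B := by
    rw [hvdef]; dsimp only; rw [hQ2, hP21]; push_cast; ring
  have hw2 : w 2 = -Complex.I * k * (Complex.exp (-Complex.I * k * (2:ℝ)) * B) := by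
    rw [hwdef]; dsimp only; rw [hQ2, hP21]; push_cast; ring
  have hWB : W 2 = -(k * Complex.normSq B) := by
    rw [hWdef]
    dsimp only
    rw [hv2, hw2, map_mul]
    have hconjarg : (starRingEnd ℂ) (-Complex.I * k * ((2:ℝ):ℂ))
        = Complex.I * k * ((2:ℝ):ℂ) := by
      rw [map_mul, map_mul, map_neg, Complex.conj_I, Complex.conj_ofReal, Complex.conj_ofReal]
      ring
    have hconjE : (starRingEnd ℂ) (Complex.exp (-Complex.I * k * (2:ℝ)))
        = Complex.exp (Complex.I * k * (2:ℝ)) := by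
      rw [← Complex.exp_conj, hconjarg]
    rw [hconjE]
    have hE : Complex.exp (Complex.I * k * (2:ℝ)) * Complex.exp (-Complex.I * k * (2:ℝ)) = 1 := by
      rw [← Complex.exp_add]; ring_nf; exact Complex.exp_zero
    have hprod : Complex.exp (Complex.I * k * (2:ℝ)) * (starRingEnd ℂ) B
        * (-Complex.I * k * (Complex.exp (-Complex.I * k * (2:ℝ)) * B))
        = -Complex.I * k * ((Complex.normSq B : ℝ) : ℂ) := by
      calc Complex.exp (Complex.I * k * (2:ℝ)) * (starRingEnd ℂ) B
          * (-Complex.I * k * (Complex.exp (-Complex.I * k * (2:ℝ)) * B))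
          = (Complex.exp (Complex.I * k * (2:ℝ)) * Complex.exp (-Complex.I * k * (2:ℝ)))
            * ((starRingEnd ℂ) B * B) * (-Complex.I * k) := by ring
        _ = -Complex.I * k * ((Complex.normSq B : ℝ) : ℂ) := by
            rw [hE, ← Complex.normSq_eq_conj_mul_self]; ring
    rw [hprod]
    simp
  have hB0 : B = 0 := by
    have h1 := (hW0 2).symm.trans hWB
    have h2 : Complex.normSq B = 0 := by
      have := hk
      nlinarith [Complex.normSq_nonneg B]
    exact Complex.normSq_eq_zero.mp h2
  have hQ1 : Q 1 = 0 := by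
    show (∫ t in (1:ℝ)..1, Complex.exp (-Complex.I * k * t) * φ t) = 0
    exact intervalIntegral.integral_same
  have hv1 : v 1 = 0 := by
    rw [hvdef]; dsimp only; rw [hQ1, ← hBdef, hB0]; simp
  have hw1 : w 1 = 0 := by
    rw [hwdef]; dsimp only; rw [hQ1, ← hBdef, hB0]; simp
  -- global bound for c
  obtain ⟨tm, htm, hmax'⟩ := isCompact_Icc.exists_isMaxOn
    (Set.nonempty_Icc.mpr (zero_le_one (α := ℝ))) hc.continuousOn
  have hmax : ∀ t ∈ Set.Icc (0:ℝ) 1, c t ≤ c tm := fun t ht => hmax' ht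
  set Cb : ℝ := max 1 (c tm) with hCbdef
  have hCb : ∀ t : ℝ, |c t| ≤ Cb := by
    intro t
    rw [abs_of_pos (lt_of_lt_of_le hc₀ (hcb t))]
    by_cases hmem : t ∈ Set.Ioo (0:ℝ) 1
    · exact le_trans (hmax t (Set.mem_Icc.mpr ⟨hmem.1.le, hmem.2.le⟩)) (le_max_right _ _)
    · rw [hc1 t hmem]; exact le_max_left _ _
  set Kr : ℝ := max 1 (k^2 * Cb) with hKrdef
  have hKr1 : (1:ℝ) ≤ Kr := le_max_left _ _
  have hKr0 : (0:ℝ) ≤ Kr := by linarith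
  set K : NNReal := Real.toNNReal Kr with hKdef
  have hKco : (K : ℝ) = Kr := Real.coe_toNNReal _ hKr0
  set vf : ℝ → ℂ × ℂ → ℂ × ℂ := fun t p => (p.2, ((-(k^2) * c t : ℝ) : ℂ) * p.1) with hvfdef
  have hlip : ∀ t : ℝ, LipschitzWith K (vf t) := by
    intro t
    apply LipschitzWith.of_dist_le_mul
    intro p q
    rw [Prod.dist_eq, Prod.dist_eq, hKco]
    simp only [hvfdef]
    have hKge : k^2 * |c t| ≤ Kr :=
      le_trans (mul_le_mul_of_nonneg_left (hCb t) (sq_nonneg k)) (le_max_right _ _)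
    have hd2 : dist ((((-(k^2) * c t : ℝ)):ℂ) * p.1) ((((-(k^2) * c t : ℝ)):ℂ) * q.1)
        = (k^2 * |c t|) * dist p.1 q.1 := by
      rw [dist_eq_norm, dist_eq_norm, ← mul_sub, norm_mul, Complex.norm_real]
      congr 1
      rw [Real.norm_eq_abs, abs_mul, abs_neg, abs_of_nonneg (sq_nonneg k)]
    rw [hd2]
    apply max_le
    · calc dist p.2 q.2 ≤ max (dist p.1 q.1) (dist p.2 q.2) := le_max_right _ _
        _ = 1 * max (dist p.1 q.1) (dist p.2 q.2) := (one_mul _).symm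
        _ ≤ Kr * max (dist p.1 q.1) (dist p.2 q.2) :=
            mul_le_mul_of_nonneg_right hKr1 (le_trans dist_nonneg (le_max_right _ _))
    · calc k^2 * |c t| * dist p.1 q.1 ≤ Kr * dist p.1 q.1 :=
            mul_le_mul_of_nonneg_right hKge dist_nonneg
        _ ≤ Kr * max (dist p.1 q.1) (dist p.2 q.2) :=
            mul_le_mul_of_nonneg_left (le_max_left _ _) hKr0
  have hf' : ∀ t ∈ Set.Ioc (0:ℝ) 1,
      HasDerivWithinAt (fun t => (v t, w t)) (vf t (v t, w t)) (Set.Iic t) t := by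
    intro t _
    exact ((hv' t).prodMk (hw' t)).hasDerivWithinAt
  have hg' : ∀ t ∈ Set.Ioc (0:ℝ) 1,
      HasDerivWithinAt (fun _ : ℝ => ((0:ℂ), (0:ℂ)))
        (vf t ((fun _ : ℝ => ((0:ℂ), (0:ℂ))) t)) (Set.Iic t) t := by
    intro t _
    have h0' : vf t ((0:ℂ), (0:ℂ)) = ((0:ℂ), (0:ℂ)) := by
      rw [hvfdef]; simp
    dsimp only
    rw [h0']
    exact (hasDerivAt_const t _).hasDerivWithinAt
  have huniq := ODE_solution_unique_of_mem_Icc_left (K := K) (v := vf)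
    (s := fun _ => Set.univ) (a := 0) (b := 1)
    (fun t _ => (hlip t).lipschitzOnWith)
    ((hvcont.prodMk hwcont).continuousOn)
    hf' (fun _ _ => trivial)
    continuousOn_const hg' (fun _ _ => trivial)
    (by exact Prod.ext hv1 hw1)
  have h00 := huniq (Set.left_mem_Icc.mpr zero_le_one)
  have hv0 : v 0 = 0 := congrArg Prod.fst h00
  have hw0 : w 0 = 0 := congrArg Prod.snd h00
  have hP0' : P 0 = 0 := by
    show (∫ t in (0:ℝ)..0, Complex.exp (Complex.I * k * t) * φ t) = 0
    exact intervalIntegral.integral_same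
  have hv0' : α + β * Q 0 = 0 := by
    rw [hvdef] at hv0; dsimp only at hv0
    simp only [Complex.ofReal_zero, mul_zero, Complex.exp_zero, one_mul, hP0', add_zero] at hv0
    exact hv0
  have hw0' : -Complex.I * k * α + Complex.I * k * (β * Q 0) = 0 := by
    rw [hwdef] at hw0; dsimp only at hw0
    simp only [Complex.ofReal_zero, mul_zero, Complex.exp_zero, one_mul, mul_one, hP0',
      add_zero] at hw0
    linear_combination hw0
  have hIk : Complex.I * (k:ℂ) ≠ 0 := mul_ne_zero hI hkC
  have hQeq : Complex.I * k * (β * Q 0) = Complex.I * k * α := by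
    linear_combination hw0'
  have hbq : β * Q 0 = α := mul_left_cancel₀ hIk hQeq
  have h2α : (2:ℂ) * α = 0 := by linear_combination hv0' - hbq
  have hα : α = 0 := by
    rcases mul_eq_zero.mp h2α with h | h
    · exact absurd h two_ne_zero
    · exact h
  rw [hαdef, div_eq_zero_iff] at hα
  rcases hα with h | h
  · exact Complex.exp_ne_zero _ h
  · exact (mul_ne_zero (mul_ne_zero two_ne_zero hI) hkC) h
end

section
/- Let k > 0, let x₁ < 1, and let c : [x₁, 1] → ℝ be continuous. Let u : [x₁,1] → ℂ be twice continuously differentiable with u''(x) + k² c(x) u(x) = 0 on (x₁, 1), u(x₁) = 0, and u'(1) = −ik u(1). Then u(1) = 0. -/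
/-- Key step in the proof of Lemma 2.1: if `u'' + k² c u = 0` on `(x₁, 1)`,
`u(x₁) = 0` and `u'(1) = −ik u(1)` with `k > 0`, then `u(1) = 0`. -/
theorem helmholtz_boundary_vanishing
    (k : ℝ) (hk : 0 < k) (x₁ : ℝ) (hx₁ : x₁ < 1)
    (c : ℝ → ℝ) (hc : ContinuousOn c (Set.Icc x₁ 1))
    (u : ℝ → ℂ) (hu : ContDiff ℝ 2 u)
    (hode : ∀ x ∈ Set.Ioo x₁ (1:ℝ),
      deriv (deriv u) x + (k : ℂ) ^ 2 * (c x : ℂ) * u x = 0)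
    (hzero : u x₁ = 0)
    (hbc : deriv u 1 = -Complex.I * (k : ℂ) * u 1) :
    u 1 = 0 := by
  have hud : Differentiable ℝ u := hu.differentiable (by norm_num)
  have hu1 : ContDiff ℝ 1 (deriv u) := by
    have := (contDiff_succ_iff_deriv (n := 1)).mp (by exact_mod_cast hu)
    exact this.2.2
  have hud2 : Differentiable ℝ (deriv u) := hu1.differentiable (by norm_num)
  set f : ℝ → ℝ := fun x => (deriv u x * (starRingEnd ℂ) (u x)).im with hf_def
  have hg : ∀ x, HasDerivAt (fun y => deriv u y * (starRingEnd ℂ) (u y))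
      (deriv (deriv u) x * (starRingEnd ℂ) (u x)
        + deriv u x * (starRingEnd ℂ) (deriv u x)) x := by
    intro x
    exact (hud2 x).hasDerivAt.mul ((hud x).hasDerivAt.star)
  have hf : ∀ x, HasDerivAt f ((deriv (deriv u) x * (starRingEnd ℂ) (u x)
      + deriv u x * (starRingEnd ℂ) (deriv u x)).im) x := by
    intro x
    exact Complex.imCLM.hasFDerivAt.comp_hasDerivAt x (hg x)
  have hf0 : ∀ x ∈ Set.Ioo x₁ (1:ℝ), HasDerivAt f 0 x := by
    intro x hx
    have h1 : deriv (deriv u) x = -((k:ℂ)^2 * (c x : ℂ) * u x) := by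
      have := hode x hx; linear_combination this
    have h2 : (deriv (deriv u) x * (starRingEnd ℂ) (u x)
        + deriv u x * (starRingEnd ℂ) (deriv u x)).im = 0 := by
      rw [h1]
      simp only [Complex.add_im, Complex.neg_im, Complex.neg_re, Complex.mul_im, Complex.mul_re,
        Complex.conj_re, Complex.conj_im, Complex.ofReal_re, Complex.ofReal_im,
        pow_two]
      ring
    rw [← h2]; exact hf x
  have hcont : ContinuousOn f (Set.Icc x₁ 1) :=
    (Continuous.continuousOn (by
      apply Complex.continuous_im.comp
      exact (hud2.continuous.mul (Complex.continuous_conj.comp hud.continuous))))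
  obtain ⟨ξ, hξ, hslope⟩ := exists_hasDerivAt_eq_slope f (fun _ => 0) hx₁ hcont hf0
  have hfx₁ : f x₁ = 0 := by simp [hf_def, hzero]
  have hf1 : f 1 = f x₁ := by
    have h1 := div_eq_zero_iff.mp hslope.symm
    rcases h1 with h | h
    · linarith
    · linarith
  have hf1' : f 1 = -(k * Complex.normSq (u 1)) := by
    simp only [hf_def, hbc]
    simp only [Complex.mul_im, Complex.mul_re, Complex.neg_re, Complex.neg_im,
      Complex.I_re, Complex.I_im, Complex.conj_re, Complex.conj_im,
      Complex.ofReal_re, Complex.ofReal_im, Complex.normSq_apply]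
    ring
  have : Complex.normSq (u 1) = 0 := by
    have := hf1' ▸ (hf1.trans hfx₁)
    nlinarith [Complex.normSq_nonneg (u 1)]
  exact Complex.normSq_eq_zero.mp this
end

section
/- Let N ≥ 1 be an integer, let F : ℂ^N → ℂ^N be quadratic, i.e. F(z) = B(z,z) + A(z) for a symmetric bilinear map B : ℂ^N × ℂ^N → ℂ^N and a linear map A : ℂ^N → ℂ^N, and let R > 0. Then there exists C₁ > 0, depending only on N, R and the operator norms of A and B, such that for every λ ≥ 1, every α ∈ [0,1], and all twice continuously differentiable y, h : [0,1] → ℂ^N with ‖y‖_{H²} ≤ R and ‖h‖_{H²} ≤ R, one has |J_{λ,α}(y + h) − J_{λ,α}(y) − L_{λ,α,y}(h)| ≤ C₁ e^{2λ} ‖h‖_{H²}². (Quantitative Fréchet differentiability of J_{λ,α}, established in the proof of Theorem 4.1.) -/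
open MeasureTheory

/-- The `H²(0,1)` norm of a function `g : [0,1] → ℂ^N`:
`‖g‖_{H²}² = ∫₀¹ (|g|² + |g'|² + |g''|²) dx`. -/
noncomputable def H2norm {N : ℕ} (g : ℝ → EuclideanSpace ℂ (Fin N)) : ℝ :=
  Real.sqrt (∫ x in (0:ℝ)..1,
    (‖g x‖ ^ 2 + ‖deriv g x‖ ^ 2 + ‖deriv (deriv g) x‖ ^ 2))

/-- The real `H²(0,1)` inner product
`⟨g,h⟩_{H²} = ∫₀¹ Re(⟨g,h⟩ + ⟨g',h'⟩ + ⟨g'',h''⟩) dx`. -/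
noncomputable def H2inner {N : ℕ} (g h : ℝ → EuclideanSpace ℂ (Fin N)) : ℝ :=
  ∫ x in (0:ℝ)..1,
    (((inner ℂ (g x) (h x) : ℂ)).re + ((inner ℂ (deriv g x) (deriv h x) : ℂ)).re
      + ((inner ℂ (deriv (deriv g) x) (deriv (deriv h) x) : ℂ)).re)

/-- The weighted Tikhonov-like functional
`J_{λ,α}(y) = e^{2λ} ∫₀¹ |y'' + F(y')|² e^{-2λx} dx + α‖y‖_{H²}²`. -/
noncomputable def Jfun {N : ℕ}
    (F : EuclideanSpace ℂ (Fin N) → EuclideanSpace ℂ (Fin N))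
    (lam α : ℝ) (y : ℝ → EuclideanSpace ℂ (Fin N)) : ℝ :=
  Real.exp (2 * lam) *
      (∫ x in (0:ℝ)..1, ‖deriv (deriv y) x + F (deriv y x)‖ ^ 2 * Real.exp (-2 * lam * x))
    + α * (H2norm y) ^ 2

/-- The linearization (Fréchet derivative) of `J_{λ,α}` at `y` applied to `h`, where
`F(z) = B(z,z) + A(z)`:
`L_{λ,α,y}(h) = e^{2λ} ∫₀¹ 2Re⟨h'' + 2B(y',h') + A(h'), y'' + F(y')⟩ e^{-2λx} dx
  + 2α⟨y,h⟩_{H²}`. -/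
noncomputable def Lfun {N : ℕ}
    (B : EuclideanSpace ℂ (Fin N) →L[ℂ] EuclideanSpace ℂ (Fin N) →L[ℂ] EuclideanSpace ℂ (Fin N))
    (A : EuclideanSpace ℂ (Fin N) →L[ℂ] EuclideanSpace ℂ (Fin N))
    (lam α : ℝ) (y h : ℝ → EuclideanSpace ℂ (Fin N)) : ℝ :=
  Real.exp (2 * lam) *
      (∫ x in (0:ℝ)..1,
        2 * ((inner ℂ (deriv (deriv h) x + (2:ℂ) • B (deriv y x) (deriv h x) + A (deriv h x))
              (deriv (deriv y) x + (B (deriv y x) (deriv y x) + A (deriv y x))) : ℂ)).re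
          * Real.exp (-2 * lam * x))
    + 2 * α * H2inner y h


section Helpers
open intervalIntegral
variable {N : ℕ}
local notation "E" => EuclideanSpace ℂ (Fin N)

lemma exists_point_le_integral {g : ℝ → ℝ} (hg : Continuous g) :
    ∃ t ∈ Set.Icc (0:ℝ) 1, g t ≤ ∫ s in (0:ℝ)..1, g s := by
  by_contra hcon
  push_neg at hcon
  obtain ⟨t, ht, hmin⟩ := isCompact_Icc.exists_isMinOn (Set.nonempty_Icc.2 (by norm_num : (0:ℝ) ≤ 1)) hg.continuousOn
  have h1 : ∫ s in (0:ℝ)..1, g t ≤ ∫ s in (0:ℝ)..1, g s :=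
    integral_mono_on (by norm_num) (intervalIntegrable_const) (hg.intervalIntegrable _ _)
      (fun s hs => hmin hs)
  rw [intervalIntegral.integral_const] at h1
  simp at h1
  exact absurd (hcon t ht) (not_lt.2 h1)

lemma hasDerivAt_norm_sq {f : ℝ → E} {f' : E} {t : ℝ} (hf : HasDerivAt f f' t) :
    HasDerivAt (fun s => ‖f s‖ ^ 2) (2 * (inner ℂ f' (f t) : ℂ).re) t := by
  have h1 := (hf.inner ℂ hf)
  have h2 := Complex.reCLM.hasFDerivAt.comp_hasDerivAt t h1
  have h3 : (Complex.reCLM ((inner ℂ (f t) f' : ℂ) + (inner ℂ f' (f t) : ℂ))) = 2 * (inner ℂ f' (f t) : ℂ).re := by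
    rw [← inner_conj_symm (f t) f']
    simp only [Complex.reCLM_apply, Complex.add_re, Complex.conj_re]
    ring
  rw [h3] at h2
  refine h2.congr_of_eventuallyEq (Filter.Eventually.of_forall fun s => ?_)
  simp only [Function.comp_apply, Complex.reCLM_apply]
  rw [← @inner_self_eq_norm_sq ℂ]
  rfl

lemma pointwise_sq_bound {f : ℝ → E} (hf : ContDiff ℝ 1 f) {x : ℝ} (hx : x ∈ Set.Icc (0:ℝ) 1) :
    ‖f x‖ ^ 2 ≤ 2 * ∫ t in (0:ℝ)..1, (‖f t‖ ^ 2 + ‖deriv f t‖ ^ 2) := by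
  have hdiff : Differentiable ℝ f := hf.differentiable one_ne_zero
  have hf'c : Continuous (deriv f) := (contDiff_one_iff_deriv.mp hf).2
  have hfc : Continuous f := hf.continuous
  set g : ℝ → ℝ := fun t => 2 * (inner ℂ (deriv f t) (f t) : ℂ).re with hg
  have hgc : Continuous g := by
    apply Continuous.mul continuous_const
    exact Complex.continuous_re.comp (hf'c.inner hfc)
  obtain ⟨t0, ht0, hle⟩ := exists_point_le_integral (g := fun t => ‖f t‖ ^ 2) (by fun_prop)
  have hftc : ∀ a b : ℝ, ∫ s in a..b, g s = ‖f b‖ ^ 2 - ‖f a‖ ^ 2 := fun a b =>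
    integral_eq_sub_of_hasDerivAt (fun s _ => hasDerivAt_norm_sq (hdiff s).hasDerivAt)
      (hgc.intervalIntegrable a b)
  have key : ‖f x‖ ^ 2 = ‖f t0‖ ^ 2 + ∫ s in t0..x, g s := by rw [hftc]; ring
  have habs : |∫ s in t0..x, g s| ≤ ∫ s in (0:ℝ)..1, |g s| := by
    have hnn : (0:ℝ → ℝ) ≤ᵐ[volume.restrict (Set.Ioc (0:ℝ) 1)] fun s => |g s| :=
      ae_of_all _ fun s => abs_nonneg _
    rcases le_total t0 x with hc | hc
    · calc |∫ s in t0..x, g s| ≤ ∫ s in t0..x, |g s| := abs_integral_le_integral_abs hc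
        _ ≤ ∫ s in (0:ℝ)..1, |g s| :=
          integral_mono_interval ht0.1 hc hx.2 hnn ((hgc.abs).intervalIntegrable _ _)
    · rw [integral_symm, abs_neg]
      calc |∫ s in x..t0, g s| ≤ ∫ s in x..t0, |g s| := abs_integral_le_integral_abs hc
        _ ≤ ∫ s in (0:ℝ)..1, |g s| :=
          integral_mono_interval hx.1 hc ht0.2 hnn ((hgc.abs).intervalIntegrable _ _)
  have hptw : ∀ s : ℝ, |g s| ≤ ‖f s‖ ^ 2 + ‖deriv f s‖ ^ 2 := by
    intro s
    have h1 : |(inner ℂ (deriv f s) (f s) : ℂ).re| ≤ ‖deriv f s‖ * ‖f s‖ := by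
      calc |(inner ℂ (deriv f s) (f s) : ℂ).re| ≤ ‖(inner ℂ (deriv f s) (f s) : ℂ)‖ := by
            exact Complex.abs_re_le_norm _
        _ ≤ ‖deriv f s‖ * ‖f s‖ := norm_inner_le_norm _ _
    rw [hg, abs_mul, abs_two]
    nlinarith [abs_nonneg ((inner ℂ (deriv f s) (f s) : ℂ).re), sq_nonneg (‖f s‖ - ‖deriv f s‖),
      norm_nonneg (f s), norm_nonneg (deriv f s)]
  have hI1 : ∫ s in (0:ℝ)..1, |g s| ≤ ∫ s in (0:ℝ)..1, (‖f s‖ ^ 2 + ‖deriv f s‖ ^ 2) :=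
    integral_mono_on (by norm_num) ((hgc.abs).intervalIntegrable _ _)
      ((by fun_prop : Continuous fun s => ‖f s‖ ^ 2 + ‖deriv f s‖ ^ 2).intervalIntegrable _ _)
      (fun s _ => hptw s)
  have hI2 : (∫ s in (0:ℝ)..1, ‖f s‖ ^ 2) ≤ ∫ s in (0:ℝ)..1, (‖f s‖ ^ 2 + ‖deriv f s‖ ^ 2) :=
    integral_mono_on (by norm_num) ((by fun_prop : Continuous fun s => ‖f s‖ ^ 2).intervalIntegrable _ _)
      ((by fun_prop : Continuous fun s => ‖f s‖ ^ 2 + ‖deriv f s‖ ^ 2).intervalIntegrable _ _)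
      (fun s _ => le_add_of_nonneg_right (sq_nonneg _))
  have := le_trans (le_abs_self _) habs
  linarith [hle]

lemma key_identity (u v w : E) :
    ‖u + v + w‖ ^ 2 - ‖u‖ ^ 2 - 2 * (inner ℂ v u : ℂ).re
      = ‖v + w‖ ^ 2 + 2 * (inner ℂ w u : ℂ).re := by
  have h : ‖u + (v + w)‖ ^ 2 = ‖u‖ ^ 2 + 2 * (inner ℂ u (v + w) : ℂ).re + ‖v + w‖ ^ 2 :=
    by exact norm_add_sq (𝕜 := ℂ) u (v + w)
  have h2 : (inner ℂ u (v + w) : ℂ).re = (inner ℂ v u : ℂ).re + (inner ℂ w u : ℂ).re := by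
    rw [inner_add_right, Complex.add_re, ← inner_conj_symm v u, ← inner_conj_symm w u,
      Complex.conj_re, Complex.conj_re]
  rw [← add_assoc] at h
  rw [h, h2]; ring

lemma deriv_contDiff_one {g : ℝ → E} (hg : ContDiff ℝ 2 g) : ContDiff ℝ 1 (deriv g) := by
  rw [(by norm_num : (2 : WithTop ℕ∞) = 1 + 1), contDiff_succ_iff_deriv] at hg
  exact hg.2.2


lemma H2norm_nonneg (g : ℝ → E) : 0 ≤ H2norm g := Real.sqrt_nonneg _

lemma H2norm_sq (g : ℝ → E) :
    (H2norm g) ^ 2 = ∫ x in (0:ℝ)..1,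
      (‖g x‖ ^ 2 + ‖deriv g x‖ ^ 2 + ‖deriv (deriv g) x‖ ^ 2) := by
  apply Real.sq_sqrt
  apply intervalIntegral.integral_nonneg (by norm_num)
  intro x _
  positivity

lemma deriv_sup_bound {g : ℝ → E} (hg : ContDiff ℝ 2 g) {x : ℝ} (hx : x ∈ Set.Icc (0:ℝ) 1) :
    ‖deriv g x‖ ^ 2 ≤ 2 * (H2norm g) ^ 2 := by
  have hcd := deriv_contDiff_one hg
  have h1 := pointwise_sq_bound hcd hx
  have hgc : Continuous g := hg.continuous
  have hg'c : Continuous (deriv g) := hcd.continuous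
  have hg''c : Continuous (deriv (deriv g)) := (contDiff_one_iff_deriv.mp hcd).2
  have h2 : (∫ t in (0:ℝ)..1, (‖deriv g t‖ ^ 2 + ‖deriv (deriv g) t‖ ^ 2))
      ≤ ∫ t in (0:ℝ)..1, (‖g t‖ ^ 2 + ‖deriv g t‖ ^ 2 + ‖deriv (deriv g) t‖ ^ 2) := by
    apply intervalIntegral.integral_mono_on (by norm_num)
      ((by fun_prop : Continuous fun t => ‖deriv g t‖ ^ 2 + ‖deriv (deriv g) t‖ ^ 2).intervalIntegrable _ _)
      ((by fun_prop : Continuous fun t => ‖g t‖ ^ 2 + ‖deriv g t‖ ^ 2 + ‖deriv (deriv g) t‖ ^ 2).intervalIntegrable _ _)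
    intro t _
    nlinarith [sq_nonneg (‖g t‖)]
  rw [H2norm_sq]
  linarith

set_option maxHeartbeats 1000000 in

lemma scalar_est (bB bA R ρ a b c p vn wn un : ℝ)
    (hbB : 0 ≤ bB) (hbA : 0 ≤ bA) (hR : 0 < R) (hρ0 : 0 ≤ ρ) (hρR : ρ ≤ R)
    (ha : 0 ≤ a) (hb : 0 ≤ b) (hc : 0 ≤ c) (hp : 0 ≤ p)
    (hvn0 : 0 ≤ vn) (hwn0 : 0 ≤ wn) (hun0 : 0 ≤ un)
    (hv : vn ≤ a + 2 * bB * p * b + bA * b) (hw : wn ≤ bB * b * b)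
    (hu : un ≤ c + bB * p * p + bA * p)
    (hb2 : b ^ 2 ≤ 2 * ρ ^ 2) (hp2 : p ^ 2 ≤ 2 * R ^ 2) :
    (vn + wn) ^ 2 + 2 * (wn * un)
      ≤ (4 + 68 * bB ^ 2 * R ^ 2 + 8 * bA ^ 2 + 2 * bB * (2 * bB * R ^ 2 + bA * (1 + 2 * R ^ 2)))
          * (a ^ 2 + b ^ 2)
        + 4 * bB * ρ ^ 2 * (1 + c ^ 2) := by
  have hρ2R2 : ρ ^ 2 ≤ R ^ 2 := by nlinarith
  have hb2R : b ^ 2 ≤ 2 * R ^ 2 := by nlinarith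
  -- bound vn^2
  have hK0 : (0:ℝ) ≤ 2 * bB * p + bA := by positivity
  have hv' : vn ≤ a + (2 * bB * p + bA) * b := by nlinarith
  have h1 : vn ^ 2 ≤ (a + (2 * bB * p + bA) * b) ^ 2 :=
    pow_le_pow_left₀ hvn0 hv' 2
  have h2 : (a + (2 * bB * p + bA) * b) ^ 2 ≤ 2 * a ^ 2 + 2 * (2 * bB * p + bA) ^ 2 * b ^ 2 := by
    nlinarith [sq_nonneg (a - (2 * bB * p + bA) * b)]
  have h3 : (2 * bB * p + bA) ^ 2 ≤ 8 * bB ^ 2 * p ^ 2 + 2 * bA ^ 2 := by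
    nlinarith [sq_nonneg (2 * bB * p - bA)]
  have h4 : bB ^ 2 * p ^ 2 ≤ 2 * bB ^ 2 * R ^ 2 := by nlinarith [sq_nonneg bB]
  have h3b : 2 * (2 * bB * p + bA) ^ 2 ≤ 32 * bB ^ 2 * R ^ 2 + 4 * bA ^ 2 := by linarith
  have h3' := mul_le_mul_of_nonneg_right h3b (sq_nonneg b)
  have hvsq : vn ^ 2 ≤ 2 * a ^ 2 + (32 * bB ^ 2 * R ^ 2 + 4 * bA ^ 2) * b ^ 2 := by
    linarith
  -- bound wn^2
  have hwsq : wn ^ 2 ≤ 2 * bB ^ 2 * R ^ 2 * b ^ 2 := by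
    have : wn ^ 2 ≤ (bB * b * b) ^ 2 := pow_le_pow_left₀ hwn0 hw 2
    nlinarith [sq_nonneg (bB * b), sq_nonneg b, mul_nonneg (mul_nonneg hbB hb) hb]
  -- bound wn * un
  have hple : p ≤ 1 + p ^ 2 := by nlinarith [sq_nonneg (p - 1)]
  have hcle : c ≤ 1 + c ^ 2 := by nlinarith [sq_nonneg (c - 1)]
  have hwu : wn * un ≤ bB * b ^ 2 * c + bB * (2 * bB * R ^ 2 + bA * (1 + 2 * R ^ 2)) * b ^ 2 := by
    have h5 : un ≤ c + (2 * bB * R ^ 2 + bA * (1 + 2 * R ^ 2)) := by nlinarith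
    have h6 : wn * un ≤ (bB * b * b) * (c + (2 * bB * R ^ 2 + bA * (1 + 2 * R ^ 2))) := by
      apply mul_le_mul hw h5 hun0 (by positivity)
    nlinarith
  have hbc : bB * b ^ 2 * c ≤ 2 * bB * ρ ^ 2 * (1 + c ^ 2) := by
    have : bB * b ^ 2 * c ≤ bB * (2 * ρ ^ 2) * (1 + c ^ 2) := by
      apply mul_le_mul (by nlinarith) hcle hc (by positivity)
    nlinarith
  have hsum : (vn + wn) ^ 2 ≤ 2 * vn ^ 2 + 2 * wn ^ 2 := by nlinarith [sq_nonneg (vn - wn)]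
  have hCcoef : (0:ℝ) ≤ 68 * bB ^ 2 * R ^ 2 + 8 * bA ^ 2
      + 2 * bB * (2 * bB * R ^ 2 + bA * (1 + 2 * R ^ 2)) := by positivity
  have hA2 : (0:ℝ) ≤ (68 * bB ^ 2 * R ^ 2 + 8 * bA ^ 2
      + 2 * bB * (2 * bB * R ^ 2 + bA * (1 + 2 * R ^ 2))) * a ^ 2 :=
    mul_nonneg hCcoef (sq_nonneg a)
  linarith [hsum, hvsq, hwsq, hwu, hbc, hA2, sq_nonneg b]

end Helpers

set_option maxHeartbeats 1600000

/-- **Quantitative Fréchet differentiability of `J_{λ,α}`** (proof of Theorem 4.1):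
there exists `C₁ > 0` depending only on `N`, `R` and the operator norms of `A`, `B`
such that for all `λ ≥ 1`, `α ∈ [0,1]` and `C²` functions `y, h` of `H²` norm `≤ R`:
`|J_{λ,α}(y + h) − J_{λ,α}(y) − L_{λ,α,y}(h)| ≤ C₁ e^{2λ} ‖h‖_{H²}²`. -/
theorem frechet_differentiability_of_weighted_functional {N : ℕ} (hN : 1 ≤ N)
    (B : EuclideanSpace ℂ (Fin N) →L[ℂ] EuclideanSpace ℂ (Fin N) →L[ℂ] EuclideanSpace ℂ (Fin N))
    (hBsymm : ∀ z w, B z w = B w z)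
    (A : EuclideanSpace ℂ (Fin N) →L[ℂ] EuclideanSpace ℂ (Fin N))
    (R : ℝ) (hR : 0 < R) :
    ∃ C₁ : ℝ, 0 < C₁ ∧
      ∀ lam : ℝ, 1 ≤ lam → ∀ α ∈ Set.Icc (0:ℝ) 1,
        ∀ y h : ℝ → EuclideanSpace ℂ (Fin N),
          ContDiff ℝ 2 y → ContDiff ℝ 2 h →
          H2norm y ≤ R → H2norm h ≤ R →
          |Jfun (fun z => B z z + A z) lam α (y + h)
              - Jfun (fun z => B z z + A z) lam α y
              - Lfun B A lam α y h|
            ≤ C₁ * Real.exp (2 * lam) * (H2norm h) ^ 2 := by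
  classical
  refine ⟨(4 + 68 * ‖B‖ ^ 2 * R ^ 2 + 8 * ‖A‖ ^ 2
      + 2 * ‖B‖ * (2 * ‖B‖ * R ^ 2 + ‖A‖ * (1 + 2 * R ^ 2)))
      + 4 * ‖B‖ * (1 + R ^ 2) + 1, by positivity, ?_⟩
  set C₂ : ℝ := 4 + 68 * ‖B‖ ^ 2 * R ^ 2 + 8 * ‖A‖ ^ 2
      + 2 * ‖B‖ * (2 * ‖B‖ * R ^ 2 + ‖A‖ * (1 + 2 * R ^ 2)) with hC₂def
  have hC₂0 : 0 ≤ C₂ := by rw [hC₂def]; positivity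
  intro lam hlam α hα y h hy hh hyR hhR
  obtain ⟨hα0, hα1⟩ := hα
  have hy1 : Differentiable ℝ y := hy.differentiable (by norm_num)
  have hh1 : Differentiable ℝ h := hh.differentiable (by norm_num)
  have hyd : ContDiff ℝ 1 (deriv y) := deriv_contDiff_one hy
  have hhd : ContDiff ℝ 1 (deriv h) := deriv_contDiff_one hh
  have hy'd : Differentiable ℝ (deriv y) := hyd.differentiable one_ne_zero
  have hh'd : Differentiable ℝ (deriv h) := hhd.differentiable one_ne_zero
  have hyc : Continuous y := hy.continuous
  have hhc : Continuous h := hh.continuous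
  have hy'c : Continuous (deriv y) := hyd.continuous
  have hh'c : Continuous (deriv h) := hhd.continuous
  have hy''c : Continuous (deriv (deriv y)) := (contDiff_one_iff_deriv.mp hyd).2
  have hh''c : Continuous (deriv (deriv h)) := (contDiff_one_iff_deriv.mp hhd).2
  have hρ0 : 0 ≤ H2norm h := H2norm_nonneg h
  have hy0 : 0 ≤ H2norm y := H2norm_nonneg y
  -- derivatives of the sum
  have hd1 : deriv (y + h) = fun x => deriv y x + deriv h x := by
    funext x
    exact deriv_add (hy1 x) (hh1 x)
  have hd2 : deriv (deriv (y + h)) = fun x => deriv (deriv y) x + deriv (deriv h) x := by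
    rw [hd1]; funext x; exact deriv_add (hy'd x) (hh'd x)
  -- the three fields
  set u : ℝ → EuclideanSpace ℂ (Fin N) :=
    fun x => deriv (deriv y) x + (B (deriv y x) (deriv y x) + A (deriv y x)) with hu_def
  set v : ℝ → EuclideanSpace ℂ (Fin N) :=
    fun x => deriv (deriv h) x + (2:ℂ) • B (deriv y x) (deriv h x) + A (deriv h x) with hv_def
  set w : ℝ → EuclideanSpace ℂ (Fin N) :=
    fun x => B (deriv h x) (deriv h x) with hw_def
  have huc : Continuous u := by
    rw [hu_def]
    exact hy''c.add (((B.continuous.comp hy'c).clm_apply hy'c).add (A.continuous.comp hy'c))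
  have hvc : Continuous v := by
    rw [hv_def]
    exact (hh''c.add (((B.continuous.comp hy'c).clm_apply hh'c).const_smul (2:ℂ))).add
      (A.continuous.comp hh'c)
  have hwc : Continuous w := by
    rw [hw_def]
    exact (B.continuous.comp hh'c).clm_apply hh'c
  have hec : Continuous fun x : ℝ => Real.exp (-2 * lam * x) := by fun_prop
  -- pointwise expansion of the quadratic nonlinearity
  have hexp : ∀ x : ℝ,
      deriv (deriv (y + h)) x
          + (B (deriv (y + h) x) (deriv (y + h) x) + A (deriv (y + h) x))
        = u x + v x + w x := by
    intro x
    rw [hd2, hd1, hu_def, hv_def, hw_def]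
    simp only
    simp only [map_add, ContinuousLinearMap.add_apply, two_smul]
    rw [hBsymm (deriv h x) (deriv y x)]
    abel
  -- rewriting the three functionals
  have hJyh : Jfun (fun z => B z z + A z) lam α (y + h)
      = Real.exp (2 * lam)
          * (∫ x in (0:ℝ)..1, ‖u x + v x + w x‖ ^ 2 * Real.exp (-2 * lam * x))
        + α * (H2norm (y + h)) ^ 2 := by
    unfold Jfun
    congr 2
    apply intervalIntegral.integral_congr
    intro x _
    simp only
    rw [hexp x]
  have hJy : Jfun (fun z => B z z + A z) lam α y
      = Real.exp (2 * lam) * (∫ x in (0:ℝ)..1, ‖u x‖ ^ 2 * Real.exp (-2 * lam * x))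
        + α * (H2norm y) ^ 2 := rfl
  have hL : Lfun B A lam α y h
      = Real.exp (2 * lam)
          * (∫ x in (0:ℝ)..1, 2 * ((inner ℂ (v x) (u x) : ℂ)).re * Real.exp (-2 * lam * x))
        + 2 * α * H2inner y h := rfl
  -- H² expansion
  have e1 : ∀ a b : EuclideanSpace ℂ (Fin N),
      ‖a + b‖ ^ 2 = ‖a‖ ^ 2 + 2 * ((inner ℂ a b : ℂ)).re + ‖b‖ ^ 2 := fun a b => by
    simpa using norm_add_sq (𝕜 := ℂ) a b
  have hH2pt : ∀ x : ℝ,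
      ‖(y + h) x‖ ^ 2 + ‖deriv (y + h) x‖ ^ 2 + ‖deriv (deriv (y + h)) x‖ ^ 2
        = (‖y x‖ ^ 2 + ‖deriv y x‖ ^ 2 + ‖deriv (deriv y) x‖ ^ 2)
          + 2 * (((inner ℂ (y x) (h x) : ℂ)).re + ((inner ℂ (deriv y x) (deriv h x) : ℂ)).re
              + ((inner ℂ (deriv (deriv y) x) (deriv (deriv h) x) : ℂ)).re)
          + (‖h x‖ ^ 2 + ‖deriv h x‖ ^ 2 + ‖deriv (deriv h) x‖ ^ 2) := by
    intro x
    rw [hd2, hd1]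
    show ‖y x + h x‖ ^ 2 + ‖deriv y x + deriv h x‖ ^ 2
        + ‖deriv (deriv y) x + deriv (deriv h) x‖ ^ 2 = _
    rw [e1, e1, e1]; ring
  have hinc : Continuous fun x => ((inner ℂ (y x) (h x) : ℂ)).re
      + ((inner ℂ (deriv y x) (deriv h x) : ℂ)).re
      + ((inner ℂ (deriv (deriv y) x) (deriv (deriv h) x) : ℂ)).re :=
    ((Complex.continuous_re.comp (hyc.inner hhc)).add
      (Complex.continuous_re.comp (hy'c.inner hh'c))).add
      (Complex.continuous_re.comp (hy''c.inner hh''c))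
  have hyint : Continuous fun x => ‖y x‖ ^ 2 + ‖deriv y x‖ ^ 2 + ‖deriv (deriv y) x‖ ^ 2 := by
    fun_prop
  have hhint : Continuous fun x => ‖h x‖ ^ 2 + ‖deriv h x‖ ^ 2 + ‖deriv (deriv h) x‖ ^ 2 := by
    fun_prop
  have hH2 : (H2norm (y + h)) ^ 2 = (H2norm y) ^ 2 + 2 * H2inner y h + (H2norm h) ^ 2 := by
    rw [H2norm_sq, H2norm_sq, H2norm_sq]
    unfold H2inner
    calc (∫ x in (0:ℝ)..1,
        (‖(y + h) x‖ ^ 2 + ‖deriv (y + h) x‖ ^ 2 + ‖deriv (deriv (y + h)) x‖ ^ 2))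
        = ∫ x in (0:ℝ)..1,
            ((‖y x‖ ^ 2 + ‖deriv y x‖ ^ 2 + ‖deriv (deriv y) x‖ ^ 2)
              + 2 * (((inner ℂ (y x) (h x) : ℂ)).re + ((inner ℂ (deriv y x) (deriv h x) : ℂ)).re
                  + ((inner ℂ (deriv (deriv y) x) (deriv (deriv h) x) : ℂ)).re)
              + (‖h x‖ ^ 2 + ‖deriv h x‖ ^ 2 + ‖deriv (deriv h) x‖ ^ 2)) :=
          intervalIntegral.integral_congr (fun x _ => hH2pt x)
      _ = (∫ x in (0:ℝ)..1,
            ((‖y x‖ ^ 2 + ‖deriv y x‖ ^ 2 + ‖deriv (deriv y) x‖ ^ 2)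
              + 2 * (((inner ℂ (y x) (h x) : ℂ)).re + ((inner ℂ (deriv y x) (deriv h x) : ℂ)).re
                  + ((inner ℂ (deriv (deriv y) x) (deriv (deriv h) x) : ℂ)).re)))
          + ∫ x in (0:ℝ)..1, (‖h x‖ ^ 2 + ‖deriv h x‖ ^ 2 + ‖deriv (deriv h) x‖ ^ 2) := by
          erw [intervalIntegral.integral_add
            ((hyint.add (continuous_const.mul hinc)).intervalIntegrable _ _)
            (hhint.intervalIntegrable _ _)]
          rfl
      _ = ((∫ x in (0:ℝ)..1, (‖y x‖ ^ 2 + ‖deriv y x‖ ^ 2 + ‖deriv (deriv y) x‖ ^ 2))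
          + ∫ x in (0:ℝ)..1,
              2 * (((inner ℂ (y x) (h x) : ℂ)).re + ((inner ℂ (deriv y x) (deriv h x) : ℂ)).re
                + ((inner ℂ (deriv (deriv y) x) (deriv (deriv h) x) : ℂ)).re))
          + ∫ x in (0:ℝ)..1, (‖h x‖ ^ 2 + ‖deriv h x‖ ^ 2 + ‖deriv (deriv h) x‖ ^ 2) := by
          erw [intervalIntegral.integral_add (hyint.intervalIntegrable _ _)
            ((continuous_const.mul hinc).intervalIntegrable _ _)]
          rfl
      _ = _ := by
          rw [intervalIntegral.integral_const_mul]
          try ring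
  -- combine the three weighted integrals
  have hS1c : Continuous fun x => ‖u x + v x + w x‖ ^ 2 * Real.exp (-2 * lam * x) :=
    ((((huc.add hvc).add hwc).norm.pow 2).mul hec)
  have hS2c : Continuous fun x => ‖u x‖ ^ 2 * Real.exp (-2 * lam * x) :=
    ((huc.norm.pow 2).mul hec)
  have hS3c : Continuous fun x => 2 * ((inner ℂ (v x) (u x) : ℂ)).re * Real.exp (-2 * lam * x) :=
    ((continuous_const.mul (Complex.continuous_re.comp (hvc.inner huc))).mul hec)
  have hS4c : Continuous fun x =>
      (‖v x + w x‖ ^ 2 + 2 * ((inner ℂ (w x) (u x) : ℂ)).re) * Real.exp (-2 * lam * x) :=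
    ((((hvc.add hwc).norm.pow 2).add
      (continuous_const.mul (Complex.continuous_re.comp (hwc.inner huc)))).mul hec)
  have hIcomb : (∫ x in (0:ℝ)..1, ‖u x + v x + w x‖ ^ 2 * Real.exp (-2 * lam * x))
      - (∫ x in (0:ℝ)..1, ‖u x‖ ^ 2 * Real.exp (-2 * lam * x))
      - (∫ x in (0:ℝ)..1, 2 * ((inner ℂ (v x) (u x) : ℂ)).re * Real.exp (-2 * lam * x))
      = ∫ x in (0:ℝ)..1,
          (‖v x + w x‖ ^ 2 + 2 * ((inner ℂ (w x) (u x) : ℂ)).re) * Real.exp (-2 * lam * x) := by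
    erw [← intervalIntegral.integral_sub (hS1c.intervalIntegrable _ _) (hS2c.intervalIntegrable _ _),
      ← intervalIntegral.integral_sub
        ((hS1c.sub hS2c).intervalIntegrable _ _) (hS3c.intervalIntegrable _ _)]
    apply intervalIntegral.integral_congr
    intro x _
    have k := key_identity (u x) (v x) (w x)
    simp only [Pi.sub_apply]
    linear_combination Real.exp (-2 * lam * x) * k
  have hmain : Jfun (fun z => B z z + A z) lam α (y + h)
      - Jfun (fun z => B z z + A z) lam α y - Lfun B A lam α y h
      = Real.exp (2 * lam)
          * (∫ x in (0:ℝ)..1,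
              (‖v x + w x‖ ^ 2 + 2 * ((inner ℂ (w x) (u x) : ℂ)).re) * Real.exp (-2 * lam * x))
        + α * (H2norm h) ^ 2 := by
    rw [hJyh, hJy, hL, hH2, ← hIcomb]
    ring
  rw [hmain]
  -- the bounding function
  set M : ℝ → ℝ := fun x => C₂ * (‖deriv (deriv h) x‖ ^ 2 + ‖deriv h x‖ ^ 2)
      + 4 * ‖B‖ * (H2norm h) ^ 2 * (1 + ‖deriv (deriv y) x‖ ^ 2) with hM_def
  have hMc : Continuous M := by
    rw [hM_def]
    exact (continuous_const.mul ((hh''c.norm.pow 2).add (hh'c.norm.pow 2))).add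
      (continuous_const.mul (continuous_const.add (hy''c.norm.pow 2)))
  -- pointwise bound
  have hptb : ∀ x ∈ Set.Icc (0:ℝ) 1,
      |(‖v x + w x‖ ^ 2 + 2 * ((inner ℂ (w x) (u x) : ℂ)).re) * Real.exp (-2 * lam * x)| ≤ M x := by
    intro x hx
    have hb2 : ‖deriv h x‖ ^ 2 ≤ 2 * (H2norm h) ^ 2 := deriv_sup_bound hh hx
    have hp2' : ‖deriv y x‖ ^ 2 ≤ 2 * (H2norm y) ^ 2 := deriv_sup_bound hy hx
    have hp2 : ‖deriv y x‖ ^ 2 ≤ 2 * R ^ 2 := by nlinarith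
    have hexppos : 0 < Real.exp (-2 * lam * x) := Real.exp_pos _
    have hexple : Real.exp (-2 * lam * x) ≤ 1 := by
      rw [← Real.exp_zero]
      apply Real.exp_le_exp.2
      nlinarith [hx.1, hx.2]
    have hvb : ‖v x‖ ≤ ‖deriv (deriv h) x‖ + 2 * ‖B‖ * ‖deriv y x‖ * ‖deriv h x‖
        + ‖A‖ * ‖deriv h x‖ := by
      rw [hv_def]
      simp only
      refine (norm_add₃_le).trans ?_
      have h1 : ‖(2:ℂ) • B (deriv y x) (deriv h x)‖ = 2 * ‖B (deriv y x) (deriv h x)‖ := by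
        rw [norm_smul]
        norm_num
      have h2 := B.le_opNorm₂ (deriv y x) (deriv h x)
      have h3 := A.le_opNorm (deriv h x)
      rw [h1]
      linarith
    have hwb : ‖w x‖ ≤ ‖B‖ * ‖deriv h x‖ * ‖deriv h x‖ := by
      rw [hw_def]
      exact B.le_opNorm₂ _ _
    have hub : ‖u x‖ ≤ ‖deriv (deriv y) x‖ + ‖B‖ * ‖deriv y x‖ * ‖deriv y x‖
        + ‖A‖ * ‖deriv y x‖ := by
      rw [hu_def]
      simp only
      refine (norm_add_le _ _).trans ?_
      have h2 := norm_add_le (B (deriv y x) (deriv y x)) (A (deriv y x))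
      have h3 := B.le_opNorm₂ (deriv y x) (deriv y x)
      have h4 := A.le_opNorm (deriv y x)
      linarith
    have key := scalar_est ‖B‖ ‖A‖ R (H2norm h) ‖deriv (deriv h) x‖ ‖deriv h x‖
      ‖deriv (deriv y) x‖ ‖deriv y x‖ ‖v x‖ ‖w x‖ ‖u x‖
      B.opNorm_nonneg A.opNorm_nonneg hR hρ0 hhR
      (norm_nonneg _) (norm_nonneg _) (norm_nonneg _) (norm_nonneg _)
      (norm_nonneg _) (norm_nonneg _) (norm_nonneg _)
      hvb hwb hub hb2 hp2
    have hre : |((inner ℂ (w x) (u x) : ℂ)).re| ≤ ‖w x‖ * ‖u x‖ := by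
      calc |((inner ℂ (w x) (u x) : ℂ)).re| ≤ ‖(inner ℂ (w x) (u x) : ℂ)‖ := by
            exact Complex.abs_re_le_norm _
        _ ≤ ‖w x‖ * ‖u x‖ := norm_inner_le_norm _ _
    have hvwb : ‖v x + w x‖ ^ 2 ≤ (‖v x‖ + ‖w x‖) ^ 2 :=
      pow_le_pow_left₀ (norm_nonneg _) (norm_add_le _ _) 2
    have hS : |‖v x + w x‖ ^ 2 + 2 * ((inner ℂ (w x) (u x) : ℂ)).re|
        ≤ (‖v x‖ + ‖w x‖) ^ 2 + 2 * (‖w x‖ * ‖u x‖) := by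
      have := abs_add_le (‖v x + w x‖ ^ 2) (2 * ((inner ℂ (w x) (u x) : ℂ)).re)
      have h5 : |‖v x + w x‖ ^ 2| = ‖v x + w x‖ ^ 2 := abs_of_nonneg (by positivity)
      have h6 : |2 * ((inner ℂ (w x) (u x) : ℂ)).re| = 2 * |((inner ℂ (w x) (u x) : ℂ)).re| := by
        rw [abs_mul, abs_two]
      linarith
    calc |(‖v x + w x‖ ^ 2 + 2 * ((inner ℂ (w x) (u x) : ℂ)).re) * Real.exp (-2 * lam * x)|
        = |‖v x + w x‖ ^ 2 + 2 * ((inner ℂ (w x) (u x) : ℂ)).re| * Real.exp (-2 * lam * x) := by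
          rw [abs_mul, abs_of_pos hexppos]
      _ ≤ ((‖v x‖ + ‖w x‖) ^ 2 + 2 * (‖w x‖ * ‖u x‖)) * 1 := by
          apply mul_le_mul hS hexple (le_of_lt hexppos) (by positivity)
      _ ≤ M x := by
          rw [hM_def, mul_one]
          simp only
          rw [hC₂def]
          linarith
  -- integral bound
  have habs4 : |∫ x in (0:ℝ)..1,
      (‖v x + w x‖ ^ 2 + 2 * ((inner ℂ (w x) (u x) : ℂ)).re) * Real.exp (-2 * lam * x)|
      ≤ ∫ x in (0:ℝ)..1, M x := by
    calc |∫ x in (0:ℝ)..1,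
        (‖v x + w x‖ ^ 2 + 2 * ((inner ℂ (w x) (u x) : ℂ)).re) * Real.exp (-2 * lam * x)|
        ≤ ∫ x in (0:ℝ)..1,
            |(‖v x + w x‖ ^ 2 + 2 * ((inner ℂ (w x) (u x) : ℂ)).re) * Real.exp (-2 * lam * x)| :=
          intervalIntegral.abs_integral_le_integral_abs (by norm_num)
      _ ≤ ∫ x in (0:ℝ)..1, M x :=
          intervalIntegral.integral_mono_on (by norm_num)
            ((hS4c.abs).intervalIntegrable _ _) (hMc.intervalIntegrable _ _) hptb
  have hint1 : (∫ x in (0:ℝ)..1, (‖deriv (deriv h) x‖ ^ 2 + ‖deriv h x‖ ^ 2))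
      ≤ (H2norm h) ^ 2 := by
    rw [H2norm_sq]
    apply intervalIntegral.integral_mono_on (by norm_num)
      ((by fun_prop : Continuous fun x => ‖deriv (deriv h) x‖ ^ 2 + ‖deriv h x‖ ^ 2).intervalIntegrable _ _)
      (hhint.intervalIntegrable _ _)
    intro t _
    nlinarith [sq_nonneg ‖h t‖]
  have hint2 : (∫ x in (0:ℝ)..1, (1 + ‖deriv (deriv y) x‖ ^ 2)) ≤ 1 + R ^ 2 := by
    have hy2 : (H2norm y) ^ 2 ≤ R ^ 2 := pow_le_pow_left₀ hy0 hyR 2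
    have : (∫ x in (0:ℝ)..1, (1 + ‖deriv (deriv y) x‖ ^ 2))
        ≤ ∫ x in (0:ℝ)..1, (1 + (‖y x‖ ^ 2 + ‖deriv y x‖ ^ 2 + ‖deriv (deriv y) x‖ ^ 2)) := by
      apply intervalIntegral.integral_mono_on (by norm_num)
        ((by fun_prop : Continuous fun x => 1 + ‖deriv (deriv y) x‖ ^ 2).intervalIntegrable _ _)
        ((continuous_const.add hyint).intervalIntegrable _ _)
      intro t _
      show 1 + ‖deriv (deriv y) t‖ ^ 2 ≤ 1 + (‖y t‖ ^ 2 + ‖deriv y t‖ ^ 2 + ‖deriv (deriv y) t‖ ^ 2)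
      nlinarith [sq_nonneg ‖y t‖, sq_nonneg ‖deriv y t‖]
    rw [intervalIntegral.integral_add intervalIntegrable_const (hyint.intervalIntegrable _ _),
      intervalIntegral.integral_const] at this
    simp only [smul_eq_mul] at this
    rw [← H2norm_sq] at this
    linarith
  have hMint : (∫ x in (0:ℝ)..1, M x)
      ≤ (C₂ + 4 * ‖B‖ * (1 + R ^ 2)) * (H2norm h) ^ 2 := by
    have hsplit : (∫ x in (0:ℝ)..1, M x)
        = C₂ * (∫ x in (0:ℝ)..1, (‖deriv (deriv h) x‖ ^ 2 + ‖deriv h x‖ ^ 2))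
          + 4 * ‖B‖ * (H2norm h) ^ 2 * (∫ x in (0:ℝ)..1, (1 + ‖deriv (deriv y) x‖ ^ 2)) := by
      rw [hM_def]
      erw [intervalIntegral.integral_add
        ((continuous_const.mul (by fun_prop : Continuous fun x => ‖deriv (deriv h) x‖ ^ 2 + ‖deriv h x‖ ^ 2)).intervalIntegrable _ _)
        ((continuous_const.mul (by fun_prop : Continuous fun x => 1 + ‖deriv (deriv y) x‖ ^ 2)).intervalIntegrable _ _),
        intervalIntegral.integral_const_mul, intervalIntegral.integral_const_mul]
    rw [hsplit]
    have h1 : C₂ * (∫ x in (0:ℝ)..1, (‖deriv (deriv h) x‖ ^ 2 + ‖deriv h x‖ ^ 2))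
        ≤ C₂ * (H2norm h) ^ 2 := mul_le_mul_of_nonneg_left hint1 hC₂0
    have h2 : 4 * ‖B‖ * (H2norm h) ^ 2 * (∫ x in (0:ℝ)..1, (1 + ‖deriv (deriv y) x‖ ^ 2))
        ≤ 4 * ‖B‖ * (H2norm h) ^ 2 * (1 + R ^ 2) :=
      mul_le_mul_of_nonneg_left hint2 (by positivity)
    nlinarith
  -- final estimate
  have hexp1 : 1 ≤ Real.exp (2 * lam) := by
    rw [← Real.exp_zero]
    apply Real.exp_le_exp.2
    linarith
  have hexp0 : 0 < Real.exp (2 * lam) := Real.exp_pos _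
  calc |Real.exp (2 * lam)
        * (∫ x in (0:ℝ)..1,
            (‖v x + w x‖ ^ 2 + 2 * ((inner ℂ (w x) (u x) : ℂ)).re) * Real.exp (-2 * lam * x))
      + α * (H2norm h) ^ 2|
      ≤ Real.exp (2 * lam)
          * |∫ x in (0:ℝ)..1,
              (‖v x + w x‖ ^ 2 + 2 * ((inner ℂ (w x) (u x) : ℂ)).re) * Real.exp (-2 * lam * x)|
        + α * (H2norm h) ^ 2 := by
        have := abs_add_le (Real.exp (2 * lam)
          * (∫ x in (0:ℝ)..1,
              (‖v x + w x‖ ^ 2 + 2 * ((inner ℂ (w x) (u x) : ℂ)).re) * Real.exp (-2 * lam * x)))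
          (α * (H2norm h) ^ 2)
        rw [abs_mul, abs_of_pos hexp0, abs_mul, abs_of_nonneg hα0,
          abs_of_nonneg (sq_nonneg (H2norm h))] at this
        exact this
    _ ≤ Real.exp (2 * lam) * ((C₂ + 4 * ‖B‖ * (1 + R ^ 2)) * (H2norm h) ^ 2)
        + 1 * (H2norm h) ^ 2 := by
        have h1 := mul_le_mul_of_nonneg_left (habs4.trans hMint) (le_of_lt hexp0)
        have h2 : α * (H2norm h) ^ 2 ≤ 1 * (H2norm h) ^ 2 :=
          mul_le_mul_of_nonneg_right hα1 (sq_nonneg _)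
        linarith
    _ ≤ (C₂ + 4 * ‖B‖ * (1 + R ^ 2) + 1) * Real.exp (2 * lam) * (H2norm h) ^ 2 := by
        have h3 : 0 ≤ (H2norm h) ^ 2 := sq_nonneg _
        nlinarith [mul_nonneg h3 (sub_nonneg.2 hexp1)]
end

section
/- Let N ≥ 1 be an integer, let F : ℂ^N → ℂ^N be quadratic, i.e. F(z) = B(z,z) + A(z) for a symmetric bilinear map B : ℂ^N × ℂ^N → ℂ^N and a linear map A : ℂ^N → ℂ^N, and let R > 0. Then there exists C₁ > 0, depending only on N, R and the operator norms of A and B, such that for every λ ≥ 1, every α ∈ [0,1], and all twice continuously differentiable y, z : [0,1] → ℂ^N with ‖y‖_{H²} ≤ R and ‖z‖_{H²} ≤ R, one has |J_{λ,α}(y + z) − J_{λ,α}(y)| ≤ C₁ ‖z‖_{H²} e^{2λ}. (Estimate (5.181).) -/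
open MeasureTheory


section Helpers
variable {F : Type*} [NormedAddCommGroup F]

lemma normsq_diff_bound (a b : F) : |‖a + b‖ ^ 2 - ‖a‖ ^ 2| ≤ ‖b‖ * (2 * ‖a‖ + 3 * ‖b‖) := by
  have h1 : ‖a + b‖ ≤ ‖a‖ + ‖b‖ := norm_add_le a b
  have h2 : ‖a‖ ≤ ‖a + b‖ + ‖b‖ := by simpa using norm_add_le (a + b) (-b)
  rw [abs_le]
  constructor <;> nlinarith [norm_nonneg a, norm_nonneg b, norm_nonneg (a + b)]

lemma le_zero_of_bound (M J : ℝ) (hJ : 0 ≤ J) (h : ∀ t : ℝ, 0 < t → M ≤ t * J) : M ≤ 0 := by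
  refine le_of_forall_pos_le_add fun ε hε => ?_
  have ht : (0:ℝ) < ε / (J + 1) := by positivity
  have h2 : M ≤ ε := (h _ ht).trans
    (by rw [div_mul_eq_mul_div, div_le_iff₀ (by positivity)]; nlinarith)
  linarith

/-- Cauchy–Schwarz for interval integrals of continuous functions. -/
lemma cs_interval (f g : ℝ → ℝ) (hf : Continuous f) (hg : Continuous g) :
    (∫ x in (0:ℝ)..1, f x * g x)
      ≤ Real.sqrt (∫ x in (0:ℝ)..1, f x ^ 2) * Real.sqrt (∫ x in (0:ℝ)..1, g x ^ 2) := by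
  set If := ∫ x in (0:ℝ)..1, f x ^ 2 with hIf
  set Ig := ∫ x in (0:ℝ)..1, g x ^ 2 with hIg
  have hIfn : 0 ≤ If := intervalIntegral.integral_nonneg zero_le_one fun x _ => sq_nonneg _
  have hIgn : 0 ≤ Ig := intervalIntegral.integral_nonneg zero_le_one fun x _ => sq_nonneg _
  have key : ∀ t : ℝ, 0 < t →
      (∫ x in (0:ℝ)..1, f x * g x) ≤ (t * If + t⁻¹ * Ig) / 2 := by
    intro t ht
    have hpt : ∀ x, f x * g x ≤ (t * f x ^ 2 + t⁻¹ * g x ^ 2) / 2 := by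
      intro x
      have hs : 0 ≤ (Real.sqrt t * f x - Real.sqrt t⁻¹ * g x) ^ 2 := sq_nonneg _
      have h1 : Real.sqrt t ^ 2 = t := Real.sq_sqrt ht.le
      have h2 : Real.sqrt t⁻¹ ^ 2 = t⁻¹ := Real.sq_sqrt (inv_nonneg.mpr ht.le)
      have h3 : Real.sqrt t * Real.sqrt t⁻¹ = 1 := by
        rw [← Real.sqrt_mul ht.le, mul_inv_cancel₀ ht.ne', Real.sqrt_one]
      have expand : (Real.sqrt t * f x - Real.sqrt t⁻¹ * g x) ^ 2
          = (Real.sqrt t ^ 2) * f x ^ 2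
            - 2 * (Real.sqrt t * Real.sqrt t⁻¹) * (f x * g x)
            + (Real.sqrt t⁻¹ ^ 2) * g x ^ 2 := by ring
      rw [expand, h1, h2, h3] at hs
      linarith
    calc (∫ x in (0:ℝ)..1, f x * g x)
        ≤ ∫ x in (0:ℝ)..1, (t * f x ^ 2 + t⁻¹ * g x ^ 2) / 2 :=
          intervalIntegral.integral_mono_on zero_le_one
            ((hf.mul hg).intervalIntegrable _ _)
            ((((continuous_const.mul (hf.pow 2)).add
              (continuous_const.mul (hg.pow 2))).div_const 2).intervalIntegrable _ _)
            fun x _ => hpt x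
      _ = (t * If + t⁻¹ * Ig) / 2 := by
          rw [intervalIntegral.integral_div, intervalIntegral.integral_add
            ((show Continuous fun x => t * f x ^ 2 from continuous_const.mul (hf.pow 2)).intervalIntegrable _ _)
            ((show Continuous fun x => t⁻¹ * g x ^ 2 from continuous_const.mul (hg.pow 2)).intervalIntegrable _ _),
            intervalIntegral.integral_const_mul, intervalIntegral.integral_const_mul]
  rcases eq_or_lt_of_le hIfn with hf0 | hfpos
  · have h0 : (∫ x in (0:ℝ)..1, f x * g x) ≤ 0 := by
      refine le_zero_of_bound _ (Ig / 2) (by linarith) fun s hs => ?_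
      have := key s⁻¹ (inv_pos.mpr hs)
      rw [inv_inv, ← hf0] at this
      calc (∫ x in (0:ℝ)..1, f x * g x) ≤ (s⁻¹ * 0 + s * Ig) / 2 := this
        _ = s * (Ig / 2) := by ring
    exact h0.trans (by positivity)
  rcases eq_or_lt_of_le hIgn with hg0 | hgpos
  · have h0 : (∫ x in (0:ℝ)..1, f x * g x) ≤ 0 := by
      refine le_zero_of_bound _ (If / 2) (by linarith) fun s hs => ?_
      have := key s hs
      rw [← hg0] at this
      calc (∫ x in (0:ℝ)..1, f x * g x) ≤ (s * If + s⁻¹ * 0) / 2 := this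
        _ = s * (If / 2) := by ring
    exact h0.trans (by positivity)
  · have e1 : (0:ℝ) < Real.sqrt If := Real.sqrt_pos.mpr hfpos
    have e2 : (0:ℝ) < Real.sqrt Ig := Real.sqrt_pos.mpr hgpos
    have s1 : Real.sqrt If * Real.sqrt If = If := Real.mul_self_sqrt hfpos.le
    have s2 : Real.sqrt Ig * Real.sqrt Ig = Ig := Real.mul_self_sqrt hgpos.le
    have ht : (0:ℝ) < Real.sqrt Ig / Real.sqrt If := by positivity
    refine (key _ ht).trans (le_of_eq ?_)
    field_simp
    nlinarith [s1, s2, e1, e2]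
lemma sqrt_le_of_sq_le {a P : ℝ} (hP : 0 ≤ P) (h : a ≤ P ^ 2) : Real.sqrt a ≤ P := by
  calc Real.sqrt a ≤ Real.sqrt (P ^ 2) := Real.sqrt_le_sqrt h
    _ = P := Real.sqrt_sq hP

lemma diff_bound (u v : ℝ → F) (hcu : Continuous u) (hcv : Continuous v) {lam P Q : ℝ}
    (hlam : 0 ≤ lam) (hP : 0 ≤ P) (hQ : 0 ≤ Q)
    (hu2 : (∫ x in (0:ℝ)..1, ‖u x‖ ^ 2) ≤ P ^ 2)
    (hv2 : (∫ x in (0:ℝ)..1, ‖v x‖ ^ 2) ≤ Q ^ 2) :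
    |(∫ x in (0:ℝ)..1, ‖u x + v x‖ ^ 2 * Real.exp (-2 * lam * x))
        - ∫ x in (0:ℝ)..1, ‖u x‖ ^ 2 * Real.exp (-2 * lam * x)|
      ≤ 2 * (P * Q) + 3 * Q ^ 2 := by
  have hec : Continuous fun x : ℝ => Real.exp (-2 * lam * x) :=
    Real.continuous_exp.comp (continuous_const.mul continuous_id)
  have c1 : Continuous fun x => ‖u x + v x‖ ^ 2 * Real.exp (-2 * lam * x) :=
    (((hcu.add hcv).norm.pow 2).mul hec)
  have c2 : Continuous fun x => ‖u x‖ ^ 2 * Real.exp (-2 * lam * x) :=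
    ((hcu.norm.pow 2).mul hec)
  have int1 := c1.intervalIntegrable (μ := volume) 0 1
  have int2 := c2.intervalIntegrable (μ := volume) 0 1
  have intb1 : IntervalIntegrable (fun x => 2 * (‖u x‖ * ‖v x‖)) volume 0 1 :=
    (continuous_const.mul (hcu.norm.mul hcv.norm)).intervalIntegrable _ _
  have intb2 : IntervalIntegrable (fun x => 3 * ‖v x‖ ^ 2) volume 0 1 :=
    (continuous_const.mul (hcv.norm.pow 2)).intervalIntegrable _ _
  rw [← intervalIntegral.integral_sub int1 int2]
  refine (intervalIntegral.abs_integral_le_integral_abs zero_le_one).trans ?_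
  calc (∫ x in (0:ℝ)..1, |‖u x + v x‖ ^ 2 * Real.exp (-2 * lam * x)
          - ‖u x‖ ^ 2 * Real.exp (-2 * lam * x)|)
      ≤ ∫ x in (0:ℝ)..1, (2 * (‖u x‖ * ‖v x‖) + 3 * ‖v x‖ ^ 2) := by
        refine intervalIntegral.integral_mono_on zero_le_one
          ((c1.sub c2).abs.intervalIntegrable _ _) (intb1.add intb2) ?_
        intro x hx
        have hxe : Real.exp (-2 * lam * x) ≤ 1 := by
          rw [Real.exp_le_one_iff]
          nlinarith [mul_nonneg hlam hx.1]
        have hpos := Real.exp_pos (-2 * lam * x)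
        calc |‖u x + v x‖ ^ 2 * Real.exp (-2 * lam * x)
                - ‖u x‖ ^ 2 * Real.exp (-2 * lam * x)|
            = |‖u x + v x‖ ^ 2 - ‖u x‖ ^ 2| * Real.exp (-2 * lam * x) := by
              rw [← sub_mul, abs_mul, abs_of_pos hpos]
          _ ≤ (‖v x‖ * (2 * ‖u x‖ + 3 * ‖v x‖)) * 1 :=
              mul_le_mul (normsq_diff_bound _ _) hxe hpos.le (by positivity)
          _ = 2 * (‖u x‖ * ‖v x‖) + 3 * ‖v x‖ ^ 2 := by ring
    _ = 2 * (∫ x in (0:ℝ)..1, ‖u x‖ * ‖v x‖) + 3 * (∫ x in (0:ℝ)..1, ‖v x‖ ^ 2) := by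
        rw [intervalIntegral.integral_add intb1 intb2, intervalIntegral.integral_const_mul,
          intervalIntegral.integral_const_mul]
    _ ≤ 2 * (P * Q) + 3 * Q ^ 2 := by
        have hcs := cs_interval _ _ hcu.norm hcv.norm
        have h1 : Real.sqrt (∫ x in (0:ℝ)..1, ‖u x‖ ^ 2) ≤ P := sqrt_le_of_sq_le hP hu2
        have h2 : Real.sqrt (∫ x in (0:ℝ)..1, ‖v x‖ ^ 2) ≤ Q := sqrt_le_of_sq_le hQ hv2
        have hT : (∫ x in (0:ℝ)..1, ‖u x‖ * ‖v x‖) ≤ P * Q :=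
          hcs.trans (mul_le_mul h1 h2 (Real.sqrt_nonneg _) hP)
        linarith

lemma diff_bound3 (a1 a2 a3 b1 b2 b3 : ℝ → F)
    (ha1 : Continuous a1) (ha2 : Continuous a2) (ha3 : Continuous a3)
    (hb1 : Continuous b1) (hb2 : Continuous b2) (hb3 : Continuous b3)
    {P Q : ℝ} (hP : 0 ≤ P) (hQ : 0 ≤ Q)
    (ha : (∫ x in (0:ℝ)..1, (‖a1 x‖ ^ 2 + ‖a2 x‖ ^ 2 + ‖a3 x‖ ^ 2)) ≤ P ^ 2)
    (hb : (∫ x in (0:ℝ)..1, (‖b1 x‖ ^ 2 + ‖b2 x‖ ^ 2 + ‖b3 x‖ ^ 2)) ≤ Q ^ 2) :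
    |(∫ x in (0:ℝ)..1,
          (‖a1 x + b1 x‖ ^ 2 + ‖a2 x + b2 x‖ ^ 2 + ‖a3 x + b3 x‖ ^ 2))
        - ∫ x in (0:ℝ)..1, (‖a1 x‖ ^ 2 + ‖a2 x‖ ^ 2 + ‖a3 x‖ ^ 2)|
      ≤ 6 * (P * Q) + 3 * Q ^ 2 := by
  have c1 : Continuous fun x => ‖a1 x + b1 x‖ ^ 2 + ‖a2 x + b2 x‖ ^ 2 + ‖a3 x + b3 x‖ ^ 2 :=
    (((ha1.add hb1).norm.pow 2).add ((ha2.add hb2).norm.pow 2)).add ((ha3.add hb3).norm.pow 2)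
  have c2 : Continuous fun x => ‖a1 x‖ ^ 2 + ‖a2 x‖ ^ 2 + ‖a3 x‖ ^ 2 :=
    ((ha1.norm.pow 2).add (ha2.norm.pow 2)).add (ha3.norm.pow 2)
  have ia1 : IntervalIntegrable (fun x => ‖a1 x‖ ^ 2) volume 0 1 :=
    (ha1.norm.pow 2).intervalIntegrable _ _
  have ia2 : IntervalIntegrable (fun x => ‖a2 x‖ ^ 2) volume 0 1 :=
    (ha2.norm.pow 2).intervalIntegrable _ _
  have ia3 : IntervalIntegrable (fun x => ‖a3 x‖ ^ 2) volume 0 1 :=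
    (ha3.norm.pow 2).intervalIntegrable _ _
  have ib1 : IntervalIntegrable (fun x => ‖b1 x‖ ^ 2) volume 0 1 :=
    (hb1.norm.pow 2).intervalIntegrable _ _
  have ib2 : IntervalIntegrable (fun x => ‖b2 x‖ ^ 2) volume 0 1 :=
    (hb2.norm.pow 2).intervalIntegrable _ _
  have ib3 : IntervalIntegrable (fun x => ‖b3 x‖ ^ 2) volume 0 1 :=
    (hb3.norm.pow 2).intervalIntegrable _ _
  have im1 : IntervalIntegrable (fun x => 2 * (‖a1 x‖ * ‖b1 x‖)) volume 0 1 :=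
    (continuous_const.mul (ha1.norm.mul hb1.norm)).intervalIntegrable _ _
  have im2 : IntervalIntegrable (fun x => 2 * (‖a2 x‖ * ‖b2 x‖)) volume 0 1 :=
    (continuous_const.mul (ha2.norm.mul hb2.norm)).intervalIntegrable _ _
  have im3 : IntervalIntegrable (fun x => 2 * (‖a3 x‖ * ‖b3 x‖)) volume 0 1 :=
    (continuous_const.mul (ha3.norm.mul hb3.norm)).intervalIntegrable _ _
  have ibs : IntervalIntegrable (fun x => 3 * (‖b1 x‖ ^ 2 + ‖b2 x‖ ^ 2 + ‖b3 x‖ ^ 2)) volume 0 1 :=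
    (continuous_const.mul (((hb1.norm.pow 2).add (hb2.norm.pow 2)).add (hb3.norm.pow 2))).intervalIntegrable _ _
  -- individual integrals are bounded
  have hsplita : (∫ x in (0:ℝ)..1, (‖a1 x‖ ^ 2 + ‖a2 x‖ ^ 2 + ‖a3 x‖ ^ 2))
      = (∫ x in (0:ℝ)..1, ‖a1 x‖ ^ 2) + (∫ x in (0:ℝ)..1, ‖a2 x‖ ^ 2)
        + (∫ x in (0:ℝ)..1, ‖a3 x‖ ^ 2) := by
    rw [intervalIntegral.integral_add (ia1.add ia2) ia3, intervalIntegral.integral_add ia1 ia2]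
  have hsplitb : (∫ x in (0:ℝ)..1, (‖b1 x‖ ^ 2 + ‖b2 x‖ ^ 2 + ‖b3 x‖ ^ 2))
      = (∫ x in (0:ℝ)..1, ‖b1 x‖ ^ 2) + (∫ x in (0:ℝ)..1, ‖b2 x‖ ^ 2)
        + (∫ x in (0:ℝ)..1, ‖b3 x‖ ^ 2) := by
    rw [intervalIntegral.integral_add (ib1.add ib2) ib3, intervalIntegral.integral_add ib1 ib2]
  have na1 : 0 ≤ (∫ x in (0:ℝ)..1, ‖a1 x‖ ^ 2) :=
    intervalIntegral.integral_nonneg zero_le_one fun x _ => by positivity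
  have na2 : 0 ≤ (∫ x in (0:ℝ)..1, ‖a2 x‖ ^ 2) :=
    intervalIntegral.integral_nonneg zero_le_one fun x _ => by positivity
  have na3 : 0 ≤ (∫ x in (0:ℝ)..1, ‖a3 x‖ ^ 2) :=
    intervalIntegral.integral_nonneg zero_le_one fun x _ => by positivity
  have nb1 : 0 ≤ (∫ x in (0:ℝ)..1, ‖b1 x‖ ^ 2) :=
    intervalIntegral.integral_nonneg zero_le_one fun x _ => by positivity
  have nb2 : 0 ≤ (∫ x in (0:ℝ)..1, ‖b2 x‖ ^ 2) :=
    intervalIntegral.integral_nonneg zero_le_one fun x _ => by positivity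
  have nb3 : 0 ≤ (∫ x in (0:ℝ)..1, ‖b3 x‖ ^ 2) :=
    intervalIntegral.integral_nonneg zero_le_one fun x _ => by positivity
  have hT1 : (∫ x in (0:ℝ)..1, ‖a1 x‖ * ‖b1 x‖) ≤ P * Q :=
    (cs_interval _ _ ha1.norm hb1.norm).trans
      (mul_le_mul (sqrt_le_of_sq_le hP (by linarith [hsplita ▸ ha]))
        (sqrt_le_of_sq_le hQ (by linarith [hsplitb ▸ hb])) (Real.sqrt_nonneg _) hP)
  have hT2 : (∫ x in (0:ℝ)..1, ‖a2 x‖ * ‖b2 x‖) ≤ P * Q :=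
    (cs_interval _ _ ha2.norm hb2.norm).trans
      (mul_le_mul (sqrt_le_of_sq_le hP (by linarith [hsplita ▸ ha]))
        (sqrt_le_of_sq_le hQ (by linarith [hsplitb ▸ hb])) (Real.sqrt_nonneg _) hP)
  have hT3 : (∫ x in (0:ℝ)..1, ‖a3 x‖ * ‖b3 x‖) ≤ P * Q :=
    (cs_interval _ _ ha3.norm hb3.norm).trans
      (mul_le_mul (sqrt_le_of_sq_le hP (by linarith [hsplita ▸ ha]))
        (sqrt_le_of_sq_le hQ (by linarith [hsplitb ▸ hb])) (Real.sqrt_nonneg _) hP)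
  rw [← intervalIntegral.integral_sub (c1.intervalIntegrable _ _) (c2.intervalIntegrable _ _)]
  refine (intervalIntegral.abs_integral_le_integral_abs zero_le_one).trans ?_
  calc (∫ x in (0:ℝ)..1, |(‖a1 x + b1 x‖ ^ 2 + ‖a2 x + b2 x‖ ^ 2 + ‖a3 x + b3 x‖ ^ 2)
          - (‖a1 x‖ ^ 2 + ‖a2 x‖ ^ 2 + ‖a3 x‖ ^ 2)|)
      ≤ ∫ x in (0:ℝ)..1, (2 * (‖a1 x‖ * ‖b1 x‖) + 2 * (‖a2 x‖ * ‖b2 x‖)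
          + 2 * (‖a3 x‖ * ‖b3 x‖) + 3 * (‖b1 x‖ ^ 2 + ‖b2 x‖ ^ 2 + ‖b3 x‖ ^ 2)) := by
        refine intervalIntegral.integral_mono_on zero_le_one
          ((c1.sub c2).abs.intervalIntegrable _ _) (((im1.add im2).add im3).add ibs) ?_
        intro x _
        have e1 := normsq_diff_bound (a1 x) (b1 x)
        have e2 := normsq_diff_bound (a2 x) (b2 x)
        have e3 := normsq_diff_bound (a3 x) (b3 x)
        have habs : |(‖a1 x + b1 x‖ ^ 2 + ‖a2 x + b2 x‖ ^ 2 + ‖a3 x + b3 x‖ ^ 2)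
              - (‖a1 x‖ ^ 2 + ‖a2 x‖ ^ 2 + ‖a3 x‖ ^ 2)|
            ≤ |‖a1 x + b1 x‖ ^ 2 - ‖a1 x‖ ^ 2| + |‖a2 x + b2 x‖ ^ 2 - ‖a2 x‖ ^ 2|
              + |‖a3 x + b3 x‖ ^ 2 - ‖a3 x‖ ^ 2| := by
          have : (‖a1 x + b1 x‖ ^ 2 + ‖a2 x + b2 x‖ ^ 2 + ‖a3 x + b3 x‖ ^ 2)
              - (‖a1 x‖ ^ 2 + ‖a2 x‖ ^ 2 + ‖a3 x‖ ^ 2)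
              = (‖a1 x + b1 x‖ ^ 2 - ‖a1 x‖ ^ 2) + (‖a2 x + b2 x‖ ^ 2 - ‖a2 x‖ ^ 2)
                + (‖a3 x + b3 x‖ ^ 2 - ‖a3 x‖ ^ 2) := by ring
          rw [this]
          exact (abs_add_le _ _).trans (add_le_add_left (abs_add_le _ _) _)
        nlinarith [habs, e1, e2, e3]
    _ = 2 * (∫ x in (0:ℝ)..1, ‖a1 x‖ * ‖b1 x‖) + 2 * (∫ x in (0:ℝ)..1, ‖a2 x‖ * ‖b2 x‖)
          + 2 * (∫ x in (0:ℝ)..1, ‖a3 x‖ * ‖b3 x‖)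
          + 3 * (∫ x in (0:ℝ)..1, (‖b1 x‖ ^ 2 + ‖b2 x‖ ^ 2 + ‖b3 x‖ ^ 2)) := by
        rw [intervalIntegral.integral_add ((im1.add im2).add im3) ibs,
          intervalIntegral.integral_add (im1.add im2) im3,
          intervalIntegral.integral_add im1 im2,
          intervalIntegral.integral_const_mul, intervalIntegral.integral_const_mul,
          intervalIntegral.integral_const_mul, intervalIntegral.integral_const_mul]
    _ ≤ 6 * (P * Q) + 3 * Q ^ 2 := by linarith


end Helpers

section SupBound
variable {F : Type*} [NormedAddCommGroup F] [NormedSpace ℝ F] [CompleteSpace F]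

/-- A crude Sobolev-type sup bound on `[0,1]` for `C¹` functions. -/
lemma sup_bound (w : ℝ → F) (hw : ContDiff ℝ 1 w) {x : ℝ} (hx : x ∈ Set.Icc (0:ℝ) 1) :
    ‖w x‖ ≤ Real.sqrt (∫ t in (0:ℝ)..1, ‖w t‖ ^ 2)
      + Real.sqrt (∫ t in (0:ℝ)..1, ‖deriv w t‖ ^ 2) := by
  have hwc : Continuous w := hw.continuous
  have hw' : Continuous (deriv w) := hw.continuous_deriv le_rfl
  obtain ⟨x₀, hx₀, hmin⟩ := isCompact_Icc.exists_isMinOn (Set.nonempty_Icc.mpr zero_le_one)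
    (hwc.norm).continuousOn
  have h1 : ‖w x₀‖ ≤ Real.sqrt (∫ t in (0:ℝ)..1, ‖w t‖ ^ 2) := by
    have hsq : ‖w x₀‖ ^ 2 ≤ ∫ t in (0:ℝ)..1, ‖w t‖ ^ 2 := by
      calc ‖w x₀‖ ^ 2 = ∫ t in (0:ℝ)..1, ‖w x₀‖ ^ 2 := by simp
        _ ≤ ∫ t in (0:ℝ)..1, ‖w t‖ ^ 2 :=
          intervalIntegral.integral_mono_on zero_le_one (intervalIntegrable_const)
            (((hwc.norm).pow 2).intervalIntegrable _ _)
            (fun t ht => pow_le_pow_left₀ (norm_nonneg _) (hmin ht) 2)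
    calc ‖w x₀‖ = Real.sqrt (‖w x₀‖ ^ 2) := (Real.sqrt_sq (norm_nonneg _)).symm
      _ ≤ _ := Real.sqrt_le_sqrt hsq
  have hftc : ∫ t in x₀..x, deriv w t = w x - w x₀ :=
    intervalIntegral.integral_deriv_eq_sub (fun t _ => (hw.differentiable one_ne_zero) t)
      (hw'.intervalIntegrable _ _)
  have h2 : ‖w x - w x₀‖ ≤ ∫ t in (0:ℝ)..1, ‖deriv w t‖ := by
    rw [← hftc]
    refine (intervalIntegral.norm_integral_le_abs_integral_norm).trans ?_
    rcases le_total x₀ x with h | h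
    · rw [abs_of_nonneg (intervalIntegral.integral_nonneg h fun _ _ => norm_nonneg _)]
      exact intervalIntegral.integral_mono_interval hx₀.1 h hx.2
        (Filter.Eventually.of_forall fun _ => norm_nonneg _)
        ((hw'.norm).intervalIntegrable _ _)
    · rw [intervalIntegral.integral_symm, abs_neg,
        abs_of_nonneg (intervalIntegral.integral_nonneg h fun _ _ => norm_nonneg _)]
      exact intervalIntegral.integral_mono_interval hx.1 h hx₀.2
        (Filter.Eventually.of_forall fun _ => norm_nonneg _)
        ((hw'.norm).intervalIntegrable _ _)
  have h3 : (∫ t in (0:ℝ)..1, ‖deriv w t‖) ≤ Real.sqrt (∫ t in (0:ℝ)..1, ‖deriv w t‖ ^ 2) := by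
    have := cs_interval (fun t => ‖deriv w t‖) (fun _ => (1:ℝ)) hw'.norm continuous_const
    simpa using this
  calc ‖w x‖ = ‖w x₀ + (w x - w x₀)‖ := by rw [add_sub_cancel]
    _ ≤ ‖w x₀‖ + ‖w x - w x₀‖ := norm_add_le _ _
    _ ≤ _ := add_le_add h1 (h2.trans h3)

end SupBound


set_option maxHeartbeats 2000000 in
/-- **Estimate (5.181).** There exists `C₁ > 0` depending only on `N`, `R` and the
operator norms of `A`, `B` such that for all `λ ≥ 1`, `α ∈ [0,1]` and `C²` functions
`y, z` of `H²` norm `≤ R`: `|J_{λ,α}(y + z) − J_{λ,α}(y)| ≤ C₁ ‖z‖_{H²} e^{2λ}`. -/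
theorem functional_increment_estimate {N : ℕ} (hN : 1 ≤ N)
    (B : EuclideanSpace ℂ (Fin N) →L[ℂ] EuclideanSpace ℂ (Fin N) →L[ℂ] EuclideanSpace ℂ (Fin N))
    (hBsymm : ∀ z w, B z w = B w z)
    (A : EuclideanSpace ℂ (Fin N) →L[ℂ] EuclideanSpace ℂ (Fin N))
    (R : ℝ) (hR : 0 < R) :
    ∃ C₁ : ℝ, 0 < C₁ ∧
      ∀ lam : ℝ, 1 ≤ lam → ∀ α ∈ Set.Icc (0:ℝ) 1,
        ∀ y z : ℝ → EuclideanSpace ℂ (Fin N),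
          ContDiff ℝ 2 y → ContDiff ℝ 2 z →
          H2norm y ≤ R → H2norm z ≤ R →
          |Jfun (fun w => B w w + A w) lam α (y + z)
              - Jfun (fun w => B w w + A w) lam α y|
            ≤ C₁ * H2norm z * Real.exp (2 * lam) := by
  classical
  set c : ℝ := 6 * R * ‖B‖ + ‖A‖ + 1 with hc
  have hc0 : 0 < c := by positivity
  refine ⟨10 * (1 + c ^ 2) * R + 9 * R, by positivity, ?_⟩
  intro lam hlam α hα y z hy hz hyR hzR
  obtain ⟨hα0, hα1⟩ := hα
  have hR0 : (0:ℝ) ≤ R := hR.le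
  -- smoothness bookkeeping
  have h21 : ((2 : WithTop ℕ∞)) = 1 + 1 := by norm_num
  have hy1 : Differentiable ℝ y := hy.differentiable (by norm_num)
  have hz1 : Differentiable ℝ z := hz.differentiable (by norm_num)
  have hyd : ContDiff ℝ 1 (deriv y) := ((contDiff_succ_iff_deriv).mp (h21 ▸ hy)).2.2
  have hzd : ContDiff ℝ 1 (deriv z) := ((contDiff_succ_iff_deriv).mp (h21 ▸ hz)).2.2
  have hy'd : Differentiable ℝ (deriv y) := hyd.differentiable one_ne_zero
  have hz'd : Differentiable ℝ (deriv z) := hzd.differentiable one_ne_zero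
  have hcy : Continuous y := hy.continuous
  have hcz : Continuous z := hz.continuous
  have hcy' : Continuous (deriv y) := hyd.continuous
  have hcz' : Continuous (deriv z) := hzd.continuous
  have hcy'' : Continuous (deriv (deriv y)) := hyd.continuous_deriv le_rfl
  have hcz'' : Continuous (deriv (deriv z)) := hzd.continuous_deriv le_rfl
  have hdadd : deriv (y + z) = deriv y + deriv z := by
    funext t; exact deriv_add (hy1 t) (hz1 t)
  have hdadd2 : deriv (deriv (y + z)) = deriv (deriv y) + deriv (deriv z) := by
    rw [hdadd]; funext t; exact deriv_add (hy'd t) (hz'd t)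
  set Z := H2norm z with hZdef
  have hZ0 : 0 ≤ Z := Real.sqrt_nonneg _
  -- squared H² norms
  have hyH : (H2norm y) ^ 2
      = ∫ x in (0:ℝ)..1, (‖y x‖ ^ 2 + ‖deriv y x‖ ^ 2 + ‖deriv (deriv y) x‖ ^ 2) :=
    Real.sq_sqrt (intervalIntegral.integral_nonneg zero_le_one fun x _ => by positivity)
  have hzH : Z ^ 2
      = ∫ x in (0:ℝ)..1, (‖z x‖ ^ 2 + ‖deriv z x‖ ^ 2 + ‖deriv (deriv z) x‖ ^ 2) :=
    Real.sq_sqrt (intervalIntegral.integral_nonneg zero_le_one fun x _ => by positivity)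
  have hyH2 : (H2norm y) ^ 2 ≤ R ^ 2 := by
    have := pow_le_pow_left₀ (Real.sqrt_nonneg _) hyR 2
    exact this
  have hzH2 : Z ^ 2 ≤ R ^ 2 := by
    have := pow_le_pow_left₀ hZ0 hzR 2
    exact this
  -- individual integral bounds
  have iy0 : IntervalIntegrable (fun x => ‖y x‖ ^ 2) volume 0 1 :=
    (hcy.norm.pow 2).intervalIntegrable _ _
  have iy1 : IntervalIntegrable (fun x => ‖deriv y x‖ ^ 2) volume 0 1 :=
    (hcy'.norm.pow 2).intervalIntegrable _ _
  have iy2 : IntervalIntegrable (fun x => ‖deriv (deriv y) x‖ ^ 2) volume 0 1 :=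
    (hcy''.norm.pow 2).intervalIntegrable _ _
  have iz0 : IntervalIntegrable (fun x => ‖z x‖ ^ 2) volume 0 1 :=
    (hcz.norm.pow 2).intervalIntegrable _ _
  have iz1 : IntervalIntegrable (fun x => ‖deriv z x‖ ^ 2) volume 0 1 :=
    (hcz'.norm.pow 2).intervalIntegrable _ _
  have iz2 : IntervalIntegrable (fun x => ‖deriv (deriv z) x‖ ^ 2) volume 0 1 :=
    (hcz''.norm.pow 2).intervalIntegrable _ _
  have hysplit : (H2norm y) ^ 2 = (∫ x in (0:ℝ)..1, ‖y x‖ ^ 2)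
      + (∫ x in (0:ℝ)..1, ‖deriv y x‖ ^ 2) + (∫ x in (0:ℝ)..1, ‖deriv (deriv y) x‖ ^ 2) := by
    rw [hyH, intervalIntegral.integral_add (iy0.add iy1) iy2,
      intervalIntegral.integral_add iy0 iy1]
  have hzsplit : Z ^ 2 = (∫ x in (0:ℝ)..1, ‖z x‖ ^ 2)
      + (∫ x in (0:ℝ)..1, ‖deriv z x‖ ^ 2) + (∫ x in (0:ℝ)..1, ‖deriv (deriv z) x‖ ^ 2) := by
    rw [hzH, intervalIntegral.integral_add (iz0.add iz1) iz2,
      intervalIntegral.integral_add iz0 iz1]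
  have ny0 : 0 ≤ (∫ x in (0:ℝ)..1, ‖y x‖ ^ 2) :=
    intervalIntegral.integral_nonneg zero_le_one fun x _ => by positivity
  have ny1 : 0 ≤ (∫ x in (0:ℝ)..1, ‖deriv y x‖ ^ 2) :=
    intervalIntegral.integral_nonneg zero_le_one fun x _ => by positivity
  have ny2 : 0 ≤ (∫ x in (0:ℝ)..1, ‖deriv (deriv y) x‖ ^ 2) :=
    intervalIntegral.integral_nonneg zero_le_one fun x _ => by positivity
  have nz0 : 0 ≤ (∫ x in (0:ℝ)..1, ‖z x‖ ^ 2) :=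
    intervalIntegral.integral_nonneg zero_le_one fun x _ => by positivity
  have nz1 : 0 ≤ (∫ x in (0:ℝ)..1, ‖deriv z x‖ ^ 2) :=
    intervalIntegral.integral_nonneg zero_le_one fun x _ => by positivity
  have nz2 : 0 ≤ (∫ x in (0:ℝ)..1, ‖deriv (deriv z) x‖ ^ 2) :=
    intervalIntegral.integral_nonneg zero_le_one fun x _ => by positivity
  -- sup bounds for first derivatives
  have hysup : ∀ x ∈ Set.Icc (0:ℝ) 1, ‖deriv y x‖ ≤ 2 * R := by
    intro x hx
    refine (sup_bound (deriv y) hyd hx).trans ?_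
    have e1 : Real.sqrt (∫ t in (0:ℝ)..1, ‖deriv y t‖ ^ 2) ≤ R :=
      sqrt_le_of_sq_le hR0 (by linarith)
    have e2 : Real.sqrt (∫ t in (0:ℝ)..1, ‖deriv (deriv y) t‖ ^ 2) ≤ R :=
      sqrt_le_of_sq_le hR0 (by linarith)
    linarith
  have hzsup : ∀ x ∈ Set.Icc (0:ℝ) 1, ‖deriv z x‖ ≤ 2 * R := by
    intro x hx
    refine (sup_bound (deriv z) hzd hx).trans ?_
    have e1 : Real.sqrt (∫ t in (0:ℝ)..1, ‖deriv z t‖ ^ 2) ≤ R :=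
      sqrt_le_of_sq_le hR0 (by linarith)
    have e2 : Real.sqrt (∫ t in (0:ℝ)..1, ‖deriv (deriv z) t‖ ^ 2) ≤ R :=
      sqrt_le_of_sq_le hR0 (by linarith)
    linarith
  -- the perturbation identity
  have hpt : ∀ x : ℝ,
      deriv (deriv (y + z)) x + (B (deriv (y + z) x) (deriv (y + z) x) + A (deriv (y + z) x))
      = (deriv (deriv y) x + (B (deriv y x) (deriv y x) + A (deriv y x)))
        + (deriv (deriv z) x + ((2:ℂ) • B (deriv y x) (deriv z x)
            + B (deriv z x) (deriv z x) + A (deriv z x))) := by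
    intro x
    have e1 : deriv (deriv (y + z)) x = deriv (deriv y) x + deriv (deriv z) x := by
      rw [hdadd2]; rfl
    have e2 : deriv (y + z) x = deriv y x + deriv z x := by rw [hdadd]; rfl
    rw [e1, e2]
    simp only [map_add, ContinuousLinearMap.add_apply, two_smul]
    rw [hBsymm (deriv z x) (deriv y x)]
    abel
  -- continuity of u and v
  have hcu : Continuous fun x =>
      deriv (deriv y) x + (B (deriv y x) (deriv y x) + A (deriv y x)) :=
    hcy''.add (((B.continuous.comp hcy').clm_apply hcy').add (A.continuous.comp hcy'))
  have hcv : Continuous fun x =>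
      deriv (deriv z) x + ((2:ℂ) • B (deriv y x) (deriv z x)
        + B (deriv z x) (deriv z x) + A (deriv z x)) :=
    hcz''.add (((((B.continuous.comp hcy').clm_apply hcz').const_smul (2:ℂ)).add
      ((B.continuous.comp hcz').clm_apply hcz')).add (A.continuous.comp hcz'))
  -- L² bounds on u and v
  have hub : ∀ x ∈ Set.Icc (0:ℝ) 1,
      ‖deriv (deriv y) x + (B (deriv y x) (deriv y x) + A (deriv y x))‖
        ≤ ‖deriv (deriv y) x‖ + c * ‖deriv y x‖ := by
    intro x hx
    have hBle := B.le_opNorm₂ (deriv y x) (deriv y x)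
    have hAle := A.le_opNorm (deriv y x)
    have hsupx := hysup x hx
    have h0 := norm_nonneg (deriv y x)
    have hkey : ‖B‖ * ‖deriv y x‖ * ‖deriv y x‖ ≤ ‖B‖ * ‖deriv y x‖ * (2 * R) :=
      mul_le_mul_of_nonneg_left hsupx (mul_nonneg B.opNorm_nonneg h0)
    calc ‖deriv (deriv y) x + (B (deriv y x) (deriv y x) + A (deriv y x))‖
        ≤ ‖deriv (deriv y) x‖ + ‖B (deriv y x) (deriv y x) + A (deriv y x)‖ := norm_add_le _ _
      _ ≤ ‖deriv (deriv y) x‖ + (‖B (deriv y x) (deriv y x)‖ + ‖A (deriv y x)‖) :=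
          add_le_add_right (norm_add_le _ _) _
      _ ≤ ‖deriv (deriv y) x‖ + c * ‖deriv y x‖ := by
          rw [hc]
          nlinarith [hBle, hAle, hkey, h0, B.opNorm_nonneg, A.opNorm_nonneg, hR0,
            mul_nonneg (mul_nonneg hR0 (B.opNorm_nonneg)) h0]
  have hvb : ∀ x ∈ Set.Icc (0:ℝ) 1,
      ‖deriv (deriv z) x + ((2:ℂ) • B (deriv y x) (deriv z x)
          + B (deriv z x) (deriv z x) + A (deriv z x))‖
        ≤ ‖deriv (deriv z) x‖ + c * ‖deriv z x‖ := by
    intro x hx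
    have hBle1 := B.le_opNorm₂ (deriv y x) (deriv z x)
    have hBle2 := B.le_opNorm₂ (deriv z x) (deriv z x)
    have hAle := A.le_opNorm (deriv z x)
    have hsupy := hysup x hx
    have hsupz := hzsup x hx
    have h0y := norm_nonneg (deriv y x)
    have h0z := norm_nonneg (deriv z x)
    have h2c : ‖(2:ℂ) • B (deriv y x) (deriv z x)‖ = 2 * ‖B (deriv y x) (deriv z x)‖ := by
      rw [norm_smul]; norm_num
    have hkey1 : ‖B‖ * ‖deriv y x‖ * ‖deriv z x‖ ≤ ‖B‖ * (2 * R) * ‖deriv z x‖ :=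
      mul_le_mul_of_nonneg_right (mul_le_mul_of_nonneg_left hsupy B.opNorm_nonneg) h0z
    have hkey2 : ‖B‖ * ‖deriv z x‖ * ‖deriv z x‖ ≤ ‖B‖ * (2 * R) * ‖deriv z x‖ :=
      mul_le_mul_of_nonneg_right (mul_le_mul_of_nonneg_left hsupz B.opNorm_nonneg) h0z
    calc ‖deriv (deriv z) x + ((2:ℂ) • B (deriv y x) (deriv z x)
            + B (deriv z x) (deriv z x) + A (deriv z x))‖
        ≤ ‖deriv (deriv z) x‖ + ‖(2:ℂ) • B (deriv y x) (deriv z x)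
            + B (deriv z x) (deriv z x) + A (deriv z x)‖ := norm_add_le _ _
      _ ≤ ‖deriv (deriv z) x‖ + (‖(2:ℂ) • B (deriv y x) (deriv z x)‖
            + ‖B (deriv z x) (deriv z x)‖ + ‖A (deriv z x)‖) := by
          have := norm_add₃_le (a := (2:ℂ) • B (deriv y x) (deriv z x))
            (b := B (deriv z x) (deriv z x)) (c := A (deriv z x))
          linarith
      _ ≤ ‖deriv (deriv z) x‖ + c * ‖deriv z x‖ := by
          rw [hc, h2c]
          nlinarith [hBle1, hBle2, hAle, hkey1, hkey2, h0z, B.opNorm_nonneg, hR0,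
            mul_nonneg (mul_nonneg hR0 (B.opNorm_nonneg)) h0z]
  set K : ℝ := 2 * (1 + c ^ 2) with hKdef
  have hK0 : (0:ℝ) ≤ K := by positivity
  have hIu : (∫ x in (0:ℝ)..1,
      ‖deriv (deriv y) x + (B (deriv y x) (deriv y x) + A (deriv y x))‖ ^ 2)
      ≤ (Real.sqrt K * R) ^ 2 := by
    have hPsq : (Real.sqrt K * R) ^ 2 = K * R ^ 2 := by
      rw [mul_pow, Real.sq_sqrt hK0]
    rw [hPsq]
    calc (∫ x in (0:ℝ)..1,
        ‖deriv (deriv y) x + (B (deriv y x) (deriv y x) + A (deriv y x))‖ ^ 2)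
        ≤ ∫ x in (0:ℝ)..1, (2 * ‖deriv (deriv y) x‖ ^ 2 + 2 * c ^ 2 * ‖deriv y x‖ ^ 2) := by
          refine intervalIntegral.integral_mono_on zero_le_one
            ((hcu.norm.pow 2).intervalIntegrable _ _)
            (((continuous_const.mul (hcy''.norm.pow 2)).add
              (continuous_const.mul (hcy'.norm.pow 2))).intervalIntegrable _ _) ?_
          intro x hx
          have h := hub x hx
          have h0 := norm_nonneg (deriv (deriv y) x + (B (deriv y x) (deriv y x) + A (deriv y x)))
          nlinarith [sq_nonneg (‖deriv (deriv y) x‖ - c * ‖deriv y x‖),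
            norm_nonneg (deriv y x), norm_nonneg (deriv (deriv y) x)]
      _ = 2 * (∫ x in (0:ℝ)..1, ‖deriv (deriv y) x‖ ^ 2)
            + 2 * c ^ 2 * (∫ x in (0:ℝ)..1, ‖deriv y x‖ ^ 2) := by
          rw [intervalIntegral.integral_add (iy2.const_mul 2) (iy1.const_mul (2 * c ^ 2)),
            intervalIntegral.integral_const_mul, intervalIntegral.integral_const_mul]
      _ ≤ K * R ^ 2 := by
          rw [hKdef]
          nlinarith [sq_nonneg c, ny1, ny2]
  have hIv : (∫ x in (0:ℝ)..1,
      ‖deriv (deriv z) x + ((2:ℂ) • B (deriv y x) (deriv z x)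
        + B (deriv z x) (deriv z x) + A (deriv z x))‖ ^ 2)
      ≤ (Real.sqrt K * Z) ^ 2 := by
    have hPsq : (Real.sqrt K * Z) ^ 2 = K * Z ^ 2 := by
      rw [mul_pow, Real.sq_sqrt hK0]
    rw [hPsq]
    calc (∫ x in (0:ℝ)..1,
        ‖deriv (deriv z) x + ((2:ℂ) • B (deriv y x) (deriv z x)
          + B (deriv z x) (deriv z x) + A (deriv z x))‖ ^ 2)
        ≤ ∫ x in (0:ℝ)..1, (2 * ‖deriv (deriv z) x‖ ^ 2 + 2 * c ^ 2 * ‖deriv z x‖ ^ 2) := by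
          refine intervalIntegral.integral_mono_on zero_le_one
            ((hcv.norm.pow 2).intervalIntegrable _ _)
            (((continuous_const.mul (hcz''.norm.pow 2)).add
              (continuous_const.mul (hcz'.norm.pow 2))).intervalIntegrable _ _) ?_
          intro x hx
          have h := hvb x hx
          have h0 := norm_nonneg (deriv (deriv z) x + ((2:ℂ) • B (deriv y x) (deriv z x)
            + B (deriv z x) (deriv z x) + A (deriv z x)))
          nlinarith [sq_nonneg (‖deriv (deriv z) x‖ - c * ‖deriv z x‖),
            norm_nonneg (deriv z x), norm_nonneg (deriv (deriv z) x)]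
      _ = 2 * (∫ x in (0:ℝ)..1, ‖deriv (deriv z) x‖ ^ 2)
            + 2 * c ^ 2 * (∫ x in (0:ℝ)..1, ‖deriv z x‖ ^ 2) := by
          rw [intervalIntegral.integral_add (iz2.const_mul 2) (iz1.const_mul (2 * c ^ 2)),
            intervalIntegral.integral_const_mul, intervalIntegral.integral_const_mul]
      _ ≤ K * Z ^ 2 := by
          rw [hKdef]
          nlinarith [sq_nonneg c, nz1, nz2]
  -- key estimate for the weighted integrals
  have key1 : |(∫ x in (0:ℝ)..1,
        ‖deriv (deriv (y + z)) x + (B (deriv (y + z) x) (deriv (y + z) x)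
          + A (deriv (y + z) x))‖ ^ 2 * Real.exp (-2 * lam * x))
      - ∫ x in (0:ℝ)..1,
        ‖deriv (deriv y) x + (B (deriv y x) (deriv y x) + A (deriv y x))‖ ^ 2
          * Real.exp (-2 * lam * x)| ≤ 10 * (1 + c ^ 2) * R * Z := by
    have hrw : (fun x => ‖deriv (deriv (y + z)) x + (B (deriv (y + z) x) (deriv (y + z) x)
          + A (deriv (y + z) x))‖ ^ 2 * Real.exp (-2 * lam * x))
        = fun x => ‖(deriv (deriv y) x + (B (deriv y x) (deriv y x) + A (deriv y x)))
            + (deriv (deriv z) x + ((2:ℂ) • B (deriv y x) (deriv z x)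
              + B (deriv z x) (deriv z x) + A (deriv z x)))‖ ^ 2 * Real.exp (-2 * lam * x) :=
      funext fun x => by rw [hpt x]
    rw [hrw]
    have hdb := diff_bound _ _ hcu hcv (by linarith : (0:ℝ) ≤ lam)
      (by positivity : (0:ℝ) ≤ Real.sqrt K * R) (by positivity : (0:ℝ) ≤ Real.sqrt K * Z)
      hIu hIv
    refine hdb.trans ?_
    have e1 : (Real.sqrt K * R) * (Real.sqrt K * Z) = K * (R * Z) := by
      linear_combination (R * Z) * Real.mul_self_sqrt hK0
    have e2 : (Real.sqrt K * Z) ^ 2 = K * Z ^ 2 := by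
      linear_combination (Z ^ 2) * Real.mul_self_sqrt hK0
    rw [e1, e2, hKdef]
    nlinarith [mul_nonneg (mul_nonneg (by positivity : (0:ℝ) ≤ 1 + c ^ 2) hZ0)
      (sub_nonneg.mpr (hzR : Z ≤ R))]
  -- key estimate for the H² part
  have key2 : |(H2norm (y + z)) ^ 2 - (H2norm y) ^ 2| ≤ 9 * (R * Z) := by
    have hfun : (fun x => ‖(y + z) x‖ ^ 2 + ‖deriv (y + z) x‖ ^ 2
          + ‖deriv (deriv (y + z)) x‖ ^ 2)
        = fun x => (‖y x + z x‖ ^ 2 + ‖deriv y x + deriv z x‖ ^ 2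
          + ‖deriv (deriv y) x + deriv (deriv z) x‖ ^ 2) := by
      funext t
      rw [hdadd2, hdadd]
      rfl
    have hnn : 0 ≤ ∫ x in (0:ℝ)..1, (‖y x + z x‖ ^ 2 + ‖deriv y x + deriv z x‖ ^ 2
        + ‖deriv (deriv y) x + deriv (deriv z) x‖ ^ 2) :=
      intervalIntegral.integral_nonneg zero_le_one fun x _ => by positivity
    have hS1 : (H2norm (y + z)) ^ 2 = ∫ x in (0:ℝ)..1,
        (‖y x + z x‖ ^ 2 + ‖deriv y x + deriv z x‖ ^ 2
          + ‖deriv (deriv y) x + deriv (deriv z) x‖ ^ 2) := by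
      unfold H2norm
      rw [hfun]
      exact Real.sq_sqrt hnn
    rw [hS1, hyH]
    have := diff_bound3 y (deriv y) (deriv (deriv y)) z (deriv z) (deriv (deriv z))
      hcy hcy' hcy'' hcz hcz' hcz'' hR0 hZ0 (by rw [← hyH]; exact hyH2) (le_of_eq hzH.symm)
    refine this.trans ?_
    nlinarith [hZ0, hR0, (hzR : Z ≤ R)]
  -- assembling
  have hexp0 : (0:ℝ) < Real.exp (2 * lam) := Real.exp_pos _
  have hexp1 : (1:ℝ) ≤ Real.exp (2 * lam) := Real.one_le_exp (by linarith)
  simp only [Jfun]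
  have habs : ∀ a b a' b' : ℝ, |Real.exp (2 * lam) * a + α * a' - (Real.exp (2 * lam) * b + α * b')|
      ≤ Real.exp (2 * lam) * |a - b| + α * |a' - b'| := by
    intro a b a' b'
    calc |Real.exp (2 * lam) * a + α * a' - (Real.exp (2 * lam) * b + α * b')|
        = |Real.exp (2 * lam) * (a - b) + α * (a' - b')| := by ring_nf
      _ ≤ |Real.exp (2 * lam) * (a - b)| + |α * (a' - b')| := abs_add_le _ _
      _ = Real.exp (2 * lam) * |a - b| + α * |a' - b'| := by
          rw [abs_mul, abs_mul, abs_of_pos hexp0, abs_of_nonneg hα0]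
  refine (habs _ _ _ _).trans ?_
  have h1 : Real.exp (2 * lam) * |(∫ x in (0:ℝ)..1,
        ‖deriv (deriv (y + z)) x + (B (deriv (y + z) x) (deriv (y + z) x)
          + A (deriv (y + z) x))‖ ^ 2 * Real.exp (-2 * lam * x))
      - ∫ x in (0:ℝ)..1,
        ‖deriv (deriv y) x + (B (deriv y x) (deriv y x) + A (deriv y x))‖ ^ 2
          * Real.exp (-2 * lam * x)|
      ≤ Real.exp (2 * lam) * (10 * (1 + c ^ 2) * R * Z) :=
    mul_le_mul_of_nonneg_left key1 hexp0.le
  have h2 : α * |(H2norm (y + z)) ^ 2 - (H2norm y) ^ 2| ≤ 9 * (R * Z) := by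
    calc α * |(H2norm (y + z)) ^ 2 - (H2norm y) ^ 2|
        ≤ 1 * |(H2norm (y + z)) ^ 2 - (H2norm y) ^ 2| :=
          mul_le_mul_of_nonneg_right hα1 (abs_nonneg _)
      _ = |(H2norm (y + z)) ^ 2 - (H2norm y) ^ 2| := one_mul _
      _ ≤ 9 * (R * Z) := key2
  have h3 : (9:ℝ) * (R * Z) ≤ 9 * (R * Z) * Real.exp (2 * lam) := by
    nlinarith [mul_nonneg hR0 hZ0, hexp1]
  calc Real.exp (2 * lam) * |_| + α * |_| ≤ Real.exp (2 * lam) * (10 * (1 + c ^ 2) * R * Z)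
        + 9 * (R * Z) * Real.exp (2 * lam) := by
        refine add_le_add h1 (h2.trans h3)
    _ = (10 * (1 + c ^ 2) * R + 9 * R) * Z * Real.exp (2 * lam) := by ring
end
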